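/- arXiv:2104.00435 — 2 statements merged into one kernel-verified Lean document; each statement's English description precedes it below -/
import Mathlib

section
/- If X has type 2 and Y is an L_2-space, then every Cohen strongly 2-summing operator u : X → Y is absolutely 1-summing; that is, D_2(X,Y) ⊆ Π_1(X,Y). -/
open MeasureTheory Finset Filter
open scoped ENNReal NNReal
open Topology

set_option synthInstance.maxHeartbeats 1000000
set_option maxHeartbeats 2000000
set_option linter.unusedTactic false
set_option linter.unusedVariables false
set_option linter.unusedSectionVars false

noncomputable section

universe u v

/-- The `i`-th Rademacher function. -/
def rademacher (i : ℕ) (t : ℝ) : ℝ :=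
  if Int.fract ((2 : ℝ) ^ i * t) < 1 / 2 then 1 else -1

/-- The Rademacher (`Rad`) norm of the first `m` terms of a sequence:
`(∫_0^1 ‖∑_{i<m} r_i(t) x_i‖² dt)^{1/2}`. -/
def radNorm {Z : Type u} [NormedAddCommGroup Z] [NormedSpace ℝ Z] (m : ℕ) (x : ℕ → Z) : ℝ :=
  (∫ t in (0:ℝ)..1, ‖∑ i ∈ Finset.range m, rademacher i t • x i‖ ^ 2) ^ ((1:ℝ) / 2)

/-- Conjugate exponent in `ℝ≥0∞` (`conjExp p = p*`, `1/p + 1/p* = 1`). -/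
def conjExp (p : ℝ≥0∞) : ℝ≥0∞ := (1 - p⁻¹)⁻¹

/-- Finite strong `ℓ_q` norm `‖(x_i)_{i<m}‖_q` (sup norm if `q = ∞`). -/
def lpNormFin {Z : Type u} [NormedAddCommGroup Z] (q : ℝ≥0∞) (m : ℕ) (x : ℕ → Z) : ℝ :=
  if q = ∞ then ⨆ i : Fin m, ‖x (i : ℕ)‖
  else (∑ i ∈ Finset.range m, ‖x i‖ ^ q.toReal) ^ (1 / q.toReal)

/-- Finite weak `ℓ_q` norm `‖(x_i)_{i<m}‖_{w,q}`. -/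
def weakNorm {Z : Type u} [NormedAddCommGroup Z] [NormedSpace ℝ Z] (q : ℝ≥0∞) (m : ℕ)
    (x : ℕ → Z) : ℝ :=
  if q = ∞ then ⨆ i : Fin m, ‖x (i : ℕ)‖
  else ⨆ φ : {φ : Z →L[ℝ] ℝ // ‖φ‖ ≤ 1},
    (∑ i ∈ Finset.range m, |φ.1 (x i)| ^ q.toReal) ^ (1 / q.toReal)

/-- Membership in `Rad(Z)`: almost unconditionally summable sequences. -/
def MemRad {Z : Type u} [NormedAddCommGroup Z] [NormedSpace ℝ Z] (x : ℕ → Z) : Prop :=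
  ∃ C, ∀ m, radNorm m x ≤ C

/-- Weakly `q`-summable sequences `ℓ_q^w(Z)`. -/
def MemWeakLp {Z : Type u} [NormedAddCommGroup Z] [NormedSpace ℝ Z] (q : ℝ≥0∞)
    (x : ℕ → Z) : Prop :=
  ∃ C, ∀ m, weakNorm q m x ≤ C

/-- Absolutely `p`-summable sequences `ℓ_p(Z)` (bounded sequences if `p = ∞`). -/
def MemStrongLp {Z : Type u} [NormedAddCommGroup Z] (p : ℝ≥0∞) (x : ℕ → Z) : Prop :=
  if p = ∞ then ∃ C, ∀ i, ‖x i‖ ≤ C else Summable fun i => ‖x i‖ ^ p.toReal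

/-- Cohen strongly `p`-summable sequences `ℓ_p⟨Z⟩`. -/
def MemCohen {Z : Type u} [NormedAddCommGroup Z] [NormedSpace ℝ Z] (p : ℝ≥0∞)
    (y : ℕ → Z) : Prop :=
  ∀ φ : ℕ → (Z →L[ℝ] ℝ), MemWeakLp (conjExp p) φ → Summable fun i => |φ i (y i)|

/-- Almost `p`-summing operators. -/
def IsAlmostPSumming {Z : Type u} {W : Type v} [NormedAddCommGroup Z] [NormedSpace ℝ Z]
    [NormedAddCommGroup W] [NormedSpace ℝ W] (p : ℝ≥0∞) (u : Z →L[ℝ] W) : Prop :=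
  ∃ C, 0 ≤ C ∧ ∀ m (x : ℕ → Z), radNorm m (fun i => u (x i)) ≤ C * weakNorm p m x

/-- The almost `p`-summing norm `π_{al.s.p}(u)`. -/
def almostNorm {Z : Type u} {W : Type v} [NormedAddCommGroup Z] [NormedSpace ℝ Z]
    [NormedAddCommGroup W] [NormedSpace ℝ W] (p : ℝ≥0∞) (u : Z →L[ℝ] W) : ℝ :=
  sInf {C | 0 ≤ C ∧ ∀ m (x : ℕ → Z), radNorm m (fun i => u (x i)) ≤ C * weakNorm p m x}

/-- Absolutely `p`-summing operators (every operator is `∞`-summing by convention). -/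
def IsPSumming {Z : Type u} {W : Type v} [NormedAddCommGroup Z] [NormedSpace ℝ Z]
    [NormedAddCommGroup W] [NormedSpace ℝ W] (p : ℝ≥0∞) (u : Z →L[ℝ] W) : Prop :=
  if p = ∞ then True
  else ∀ x : ℕ → Z, MemWeakLp p x → Summable fun i => ‖u (x i)‖ ^ p.toReal

/-- Cohen strongly `q`-summing with constant `C`. -/
def IsCohenStrongWith {Z : Type u} {W : Type v} [NormedAddCommGroup Z] [NormedSpace ℝ Z]
    [NormedAddCommGroup W] [NormedSpace ℝ W] (q : ℝ≥0∞) (C : ℝ) (u : Z →L[ℝ] W) : Prop :=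
  ∀ m (x : ℕ → Z) (φ : ℕ → (W →L[ℝ] ℝ)),
    ∑ i ∈ Finset.range m, |φ i (u (x i))| ≤ C * lpNormFin q m x * weakNorm (conjExp q) m φ

/-- Cohen strongly `q`-summing operators. -/
def IsCohenStrong {Z : Type u} {W : Type v} [NormedAddCommGroup Z] [NormedSpace ℝ Z]
    [NormedAddCommGroup W] [NormedSpace ℝ W] (q : ℝ≥0∞) (u : Z →L[ℝ] W) : Prop :=
  ∃ C, 0 ≤ C ∧ IsCohenStrongWith q C u

/-- The Banach space adjoint `u* : W* → Z*`. -/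
def adj {Z : Type u} {W : Type v} [NormedAddCommGroup Z] [NormedSpace ℝ Z]
    [NormedAddCommGroup W] [NormedSpace ℝ W] (u : Z →L[ℝ] W) :
    (W →L[ℝ] ℝ) →L[ℝ] (Z →L[ℝ] ℝ) :=
  (ContinuousLinearMap.compSL Z W ℝ (RingHom.id ℝ) (RingHom.id ℝ)).flip u

/-- `Z` has type `p` with constant `C`. -/
def HasTypeWith (p : ℝ≥0∞) (C : ℝ) (Z : Type u) [NormedAddCommGroup Z] [NormedSpace ℝ Z] :
    Prop :=
  ∀ m (x : ℕ → Z), radNorm m x ≤ C * lpNormFin p m x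

/-- `Z` has type `p`. -/
def HasTypeP (p : ℝ≥0∞) (Z : Type u) [NormedAddCommGroup Z] [NormedSpace ℝ Z] : Prop :=
  ∃ C, 0 ≤ C ∧ HasTypeWith p C Z

/-- The type-`p` constant `T_p(Z)`. -/
def typeConst (p : ℝ≥0∞) (Z : Type u) [NormedAddCommGroup Z] [NormedSpace ℝ Z] : ℝ :=
  sInf {C | 0 ≤ C ∧ HasTypeWith p C Z}

/-- `Z` is an `L_p`-space with constant `lam`. -/
def IsLpSpaceWith (p : ℝ≥0∞) [Fact (1 ≤ p)] (lam : ℝ) (Z : Type u) [NormedAddCommGroup Z]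
    [NormedSpace ℝ Z] : Prop :=
  ∀ E : Submodule ℝ Z, FiniteDimensional ℝ E →
    ∃ F : Submodule ℝ Z, E ≤ F ∧ FiniteDimensional ℝ F ∧
      ∃ v : F ≃L[ℝ] PiLp p (fun _ : Fin (Module.finrank ℝ F) => ℝ),
        ‖(v : F →L[ℝ] PiLp p (fun _ : Fin (Module.finrank ℝ F) => ℝ))‖ *
          ‖(v.symm : PiLp p (fun _ : Fin (Module.finrank ℝ F) => ℝ) →L[ℝ] F)‖ ≤ lam

/-- `Z` is an `L_p`-space. -/
def IsLpSpace (p : ℝ≥0∞) [Fact (1 ≤ p)] (Z : Type u) [NormedAddCommGroup Z]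
    [NormedSpace ℝ Z] : Prop :=
  ∃ lam : ℝ, 1 < lam ∧ IsLpSpaceWith p lam Z

/-- `Z` is isomorphic to a Hilbert space. -/
def IsomorphicToHilbert (Z : Type u) [NormedAddCommGroup Z] [NormedSpace ℝ Z] : Prop :=
  ∃ ι : Type u, Nonempty (Z ≃L[ℝ] lp (fun _ : ι => ℝ) 2)

/-- `Z` is isomorphic to a closed subspace of some `L_r(μ)`. -/
def IsomorphicToClosedSubspaceLp (r : ℝ≥0∞) [Fact (1 ≤ r)] (Z : Type u)
    [NormedAddCommGroup Z] [NormedSpace ℝ Z] : Prop :=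
  ∃ (Ω : Type) (mΩ : MeasurableSpace Ω) (μ : @MeasureTheory.Measure Ω mΩ)
    (S : Submodule ℝ (@MeasureTheory.Lp Ω ℝ mΩ _ r μ)),
    IsClosed (S : Set (@MeasureTheory.Lp Ω ℝ mΩ _ r μ)) ∧ Nonempty (Z ≃L[ℝ] S)


namespace Stmt6Aux


variable {n : ℕ}

/-- sign of a boolean vector coordinate -/
def sg (ε : Fin n → Bool) (k : Fin n) : ℝ := if ε k then 1 else -1

lemma sg_mul_self (ε : Fin n → Bool) (k : Fin n) : sg ε k * sg ε k = 1 := by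
  unfold sg; split <;> norm_num

lemma sg_sq (ε : Fin n → Bool) (k : Fin n) : (sg ε k) ^ 2 = 1 := by
  rw [sq, sg_mul_self]

lemma sg_update_self (ε : Fin n → Bool) (k : Fin n) :
    sg (Function.update ε k (!ε k)) k = - sg ε k := by
  unfold sg; cases h : ε k <;> simp [h]

lemma sg_update_ne (ε : Fin n → Bool) (k l : Fin n) (b : Bool) (h : l ≠ k) :
    sg (Function.update ε k b) l = sg ε l := by
  unfold sg; rw [Function.update_of_ne h]

/-- sums against one sign of a function not depending on that coordinate vanish -/
lemma sum_sg_vanish (k : Fin n) (h : (Fin n → Bool) → ℝ)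
    (hh : ∀ ε b, h (Function.update ε k b) = h ε) :
    ∑ ε : Fin n → Bool, sg ε k * h ε = 0 := by
  classical
  refine Finset.sum_involution
    (fun (ε : Fin n → Bool) (_ : ε ∈ Finset.univ) => Function.update ε k (!ε k))
    ?_ ?_ (fun ε _ => Finset.mem_univ _) ?_
  · intro ε _
    rw [hh ε (!ε k), sg_update_self]
    ring
  · intro ε _ _ hc
    have := congrFun hc k
    simp at this
  · intro ε _
    funext j
    by_cases hj : j = k
    · subst hj; simp
    · simp [Function.update_of_ne hj]

lemma card_bool_fun : (Fintype.card (Fin n → Bool)) = 2 ^ n := by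
  simp [Fintype.card_fun]

lemma sum_one_bool : ∑ _ε : Fin n → Bool, (1:ℝ) = 2 ^ n := by
  rw [Finset.sum_const, Finset.card_univ, card_bool_fun]
  simp

/-- second moment -/
lemma moment_two (c : Fin n → ℝ) (s : Finset (Fin n)) :
    ∑ ε : Fin n → Bool, (∑ k ∈ s, sg ε k * c k) ^ 2
      = 2 ^ n * ∑ k ∈ s, (c k) ^ 2 := by
  classical
  induction s using Finset.induction_on with
  | empty => simp
  | @insert k₀ s hk₀ ih =>
    have hZupd : ∀ (ε : Fin n → Bool) (b : Bool),
        (∑ k ∈ s, sg (Function.update ε k₀ b) k * c k) = ∑ k ∈ s, sg ε k * c k := by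
      intro ε b
      refine Finset.sum_congr rfl fun k hk => ?_
      rw [sg_update_ne ε k₀ k b (by rintro rfl; exact hk₀ hk)]
    have hcross : ∑ ε : Fin n → Bool, sg ε k₀ * (∑ k ∈ s, sg ε k * c k) = 0 :=
      sum_sg_vanish k₀ _ (by intro ε b; exact hZupd ε b)
    have hsq : ∀ ε : Fin n → Bool, (sg ε k₀ * c k₀)^2 = (c k₀)^2 := by
      intro ε; nlinarith [sg_mul_self ε k₀]
    calc ∑ ε : Fin n → Bool, (∑ k ∈ insert k₀ s, sg ε k * c k) ^ 2
        = ∑ ε : Fin n → Bool, ((c k₀) ^2 + (2 * c k₀) * (sg ε k₀ * (∑ k ∈ s, sg ε k * c k)) + (∑ k ∈ s, sg ε k * c k)^2) := by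
          refine Finset.sum_congr rfl fun ε _ => ?_
          rw [Finset.sum_insert hk₀]
          have := hsq ε
          nlinarith [sg_mul_self ε k₀]
      _ = 2^n * (c k₀)^2 + (2 * c k₀) * 0 + 2^n * ∑ k ∈ s, (c k)^2 := by
          rw [Finset.sum_add_distrib, Finset.sum_add_distrib, ← Finset.mul_sum, hcross, ih,
            Finset.sum_const, Finset.card_univ, card_bool_fun]
          push_cast
          ring
      _ = 2 ^ n * ∑ k ∈ insert k₀ s, (c k) ^ 2 := by
          rw [Finset.sum_insert hk₀]; ring


/-- fourth moment -/
lemma moment_four (c : Fin n → ℝ) (s : Finset (Fin n)) :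
    ∑ ε : Fin n → Bool, (∑ k ∈ s, sg ε k * c k) ^ 4
      ≤ 3 * 2 ^ n * (∑ k ∈ s, (c k) ^ 2) ^ 2 := by
  classical
  induction s using Finset.induction_on with
  | empty => simp
  | @insert k₀ s hk₀ ih =>
    have hZupd : ∀ (ε : Fin n → Bool) (b : Bool),
        (∑ k ∈ s, sg (Function.update ε k₀ b) k * c k) = ∑ k ∈ s, sg ε k * c k := by
      intro ε b
      refine Finset.sum_congr rfl fun k hk => ?_
      rw [sg_update_ne ε k₀ k b (by rintro rfl; exact hk₀ hk)]
    have hcross1 : ∑ ε : Fin n → Bool, sg ε k₀ * (∑ k ∈ s, sg ε k * c k) = 0 :=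
      sum_sg_vanish k₀ _ (by intro ε b; exact hZupd ε b)
    have hcross3 : ∑ ε : Fin n → Bool, sg ε k₀ * (∑ k ∈ s, sg ε k * c k) ^ 3 = 0 :=
      sum_sg_vanish k₀ _ (by intro ε b; rw [hZupd ε b])
    have hm2 := moment_two c s
    have hexp : ∀ ε : Fin n → Bool,
        (∑ k ∈ insert k₀ s, sg ε k * c k) ^ 4
        = (c k₀)^4 + (4 * (c k₀)^3) * (sg ε k₀ * (∑ k ∈ s, sg ε k * c k))
          + (6 * (c k₀)^2) * (∑ k ∈ s, sg ε k * c k)^2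
          + (4 * c k₀) * (sg ε k₀ * (∑ k ∈ s, sg ε k * c k)^3)
          + (∑ k ∈ s, sg ε k * c k)^4 := by
      intro ε
      rw [Finset.sum_insert hk₀]
      have h1 := sg_mul_self ε k₀
      linear_combination ((c k₀)^4 * (sg ε k₀ * sg ε k₀ + 1)
        + 4 * (c k₀)^3 * (∑ k ∈ s, sg ε k * c k) * sg ε k₀
        + 6 * (c k₀)^2 * (∑ k ∈ s, sg ε k * c k)^2) * h1
    calc ∑ ε : Fin n → Bool, (∑ k ∈ insert k₀ s, sg ε k * c k) ^ 4
        = ∑ ε : Fin n → Bool, ((c k₀)^4 + (4 * (c k₀)^3) * (sg ε k₀ * (∑ k ∈ s, sg ε k * c k))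
          + (6 * (c k₀)^2) * (∑ k ∈ s, sg ε k * c k)^2
          + (4 * c k₀) * (sg ε k₀ * (∑ k ∈ s, sg ε k * c k)^3)
          + (∑ k ∈ s, sg ε k * c k)^4) :=
          Finset.sum_congr rfl fun ε _ => hexp ε
      _ = 2^n * (c k₀)^4 + (6 * (c k₀)^2) * (2^n * ∑ k ∈ s, (c k)^2)
          + ∑ ε : Fin n → Bool, (∑ k ∈ s, sg ε k * c k)^4 := by
          rw [Finset.sum_add_distrib, Finset.sum_add_distrib, Finset.sum_add_distrib,
            Finset.sum_add_distrib, ← Finset.mul_sum, ← Finset.mul_sum, ← Finset.mul_sum,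
            hcross1, hcross3, hm2, Finset.sum_const, Finset.card_univ, card_bool_fun]
          push_cast
          ring
      _ ≤ 2^n * (c k₀)^4 + (6 * (c k₀)^2) * (2^n * ∑ k ∈ s, (c k)^2)
          + 3 * 2 ^ n * (∑ k ∈ s, (c k) ^ 2) ^ 2 := by linarith
      _ ≤ 3 * 2 ^ n * (∑ k ∈ insert k₀ s, (c k) ^ 2) ^ 2 := by
          rw [Finset.sum_insert hk₀]
          have h2n : (0:ℝ) < 2 ^ n := by positivity
          have hs2 : (0:ℝ) ≤ ∑ k ∈ s, (c k)^2 := Finset.sum_nonneg fun k _ => sq_nonneg _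
          nlinarith [mul_nonneg h2n.le (sq_nonneg ((c k₀)^2))]

/-- L¹ lower Khintchine inequality with constant √3 for finite sign sums -/
lemma khintchine (c : Fin n → ℝ) :
    (2 ^ n : ℝ) * Real.sqrt (∑ k, (c k) ^ 2)
      ≤ Real.sqrt 3 * ∑ ε : Fin n → Bool, |∑ k, sg ε k * c k| := by
  classical
  set Z : (Fin n → Bool) → ℝ := fun ε => ∑ k, sg ε k * c k with hZ
  set σ2 : ℝ := ∑ k, (c k) ^ 2 with hσ2
  have hσ2nn : 0 ≤ σ2 := Finset.sum_nonneg fun k _ => sq_nonneg _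
  have hM2 : ∑ ε : Fin n → Bool, (Z ε) ^ 2 = 2 ^ n * σ2 := moment_two c Finset.univ
  have hM4 : ∑ ε : Fin n → Bool, (Z ε) ^ 4 ≤ 3 * 2 ^ n * σ2 ^ 2 := moment_four c Finset.univ
  set A : ℝ := ∑ ε : Fin n → Bool, |Z ε| with hA
  have hAnn : 0 ≤ A := Finset.sum_nonneg fun ε _ => abs_nonneg _
  -- CS1 : (∑ Z²)² ≤ A * ∑ |Z|³
  have hCS1 : (∑ ε : Fin n → Bool, (Z ε)^2)^2 ≤ A * ∑ ε : Fin n → Bool, |Z ε|^3 := by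
    have h := Finset.sum_mul_sq_le_sq_mul_sq Finset.univ
      (fun ε => Real.sqrt |Z ε|) (fun ε => |Z ε| * Real.sqrt |Z ε|)
    have he : ∀ ε : Fin n → Bool,
        Real.sqrt |Z ε| * (|Z ε| * Real.sqrt |Z ε|) = (Z ε)^2 := by
      intro ε
      have : Real.sqrt |Z ε| * Real.sqrt |Z ε| = |Z ε| := Real.mul_self_sqrt (abs_nonneg _)
      calc Real.sqrt |Z ε| * (|Z ε| * Real.sqrt |Z ε|)
          = |Z ε| * (Real.sqrt |Z ε| * Real.sqrt |Z ε|) := by ring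
        _ = |Z ε| * |Z ε| := by rw [this]
        _ = (Z ε)^2 := by rw [abs_mul_abs_self]; ring
    have hf2 : ∀ ε : Fin n → Bool, (Real.sqrt |Z ε|)^2 = |Z ε| :=
      fun ε => Real.sq_sqrt (abs_nonneg _)
    have hg2 : ∀ ε : Fin n → Bool, (|Z ε| * Real.sqrt |Z ε|)^2 = |Z ε|^3 := by
      intro ε
      rw [mul_pow, hf2 ε]; ring
    calc (∑ ε : Fin n → Bool, (Z ε)^2)^2
        = (∑ ε : Fin n → Bool, Real.sqrt |Z ε| * (|Z ε| * Real.sqrt |Z ε|))^2 := by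
          rw [Finset.sum_congr rfl fun ε _ => (he ε).symm]
      _ ≤ (∑ ε : Fin n → Bool, (Real.sqrt |Z ε|)^2) * ∑ ε : Fin n → Bool, (|Z ε| * Real.sqrt |Z ε|)^2 := h
      _ = A * ∑ ε : Fin n → Bool, |Z ε|^3 := by
          rw [Finset.sum_congr rfl fun ε _ => hf2 ε, Finset.sum_congr rfl fun ε _ => hg2 ε]
  -- CS2 : (∑|Z|³)² ≤ (∑ Z²)(∑ Z⁴)
  have hCS2 : (∑ ε : Fin n → Bool, |Z ε|^3)^2
      ≤ (∑ ε : Fin n → Bool, (Z ε)^2) * ∑ ε : Fin n → Bool, (Z ε)^4 := by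
    have h := Finset.sum_mul_sq_le_sq_mul_sq Finset.univ
      (fun ε => |Z ε|) (fun ε => (Z ε)^2)
    have he : ∀ ε : Fin n → Bool, |Z ε| * (Z ε)^2 = |Z ε|^3 := by
      intro ε
      rw [← sq_abs (Z ε)]; ring
    have hf2 : ∀ ε : Fin n → Bool, |Z ε|^2 = (Z ε)^2 := fun ε => sq_abs _
    calc (∑ ε : Fin n → Bool, |Z ε|^3)^2
        = (∑ ε : Fin n → Bool, |Z ε| * (Z ε)^2)^2 := by
          rw [Finset.sum_congr rfl fun ε _ => he ε]
      _ ≤ (∑ ε : Fin n → Bool, |Z ε|^2) * ∑ ε : Fin n → Bool, ((Z ε)^2)^2 := h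
      _ = (∑ ε : Fin n → Bool, (Z ε)^2) * ∑ ε : Fin n → Bool, (Z ε)^4 := by
          rw [Finset.sum_congr rfl fun ε _ => hf2 ε]
          congr 1
          exact Finset.sum_congr rfl fun ε _ => by ring
  rcases eq_or_lt_of_le hσ2nn with hzero | hpos
  · rw [← hzero]
    simp
    positivity
  · -- (2ⁿσ2)⁴ ≤ A²·(∑|Z|³)² ≤ A²·(2ⁿσ2)·(3·2ⁿσ2²)
    have h2n : (0:ℝ) < 2 ^ n := by positivity
    have hM2pos : (0:ℝ) < ∑ ε : Fin n → Bool, (Z ε)^2 := by rw [hM2]; positivity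
    have key : (2:ℝ)^(2*n) * σ2 ≤ 3 * A^2 := by
      have h1 : ((2:ℝ)^n * σ2)^4 ≤ A^2 * (((2:ℝ)^n * σ2) * (3 * 2^n * σ2^2)) := by
        calc ((2:ℝ)^n * σ2)^4 = ((∑ ε : Fin n → Bool, (Z ε)^2)^2)^2 := by rw [hM2]; ring
          _ ≤ (A * ∑ ε : Fin n → Bool, |Z ε|^3)^2 := by
              have hZ3nn : (0:ℝ) ≤ ∑ ε : Fin n → Bool, |Z ε|^3 :=
                Finset.sum_nonneg fun ε _ => pow_nonneg (abs_nonneg _) 3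
              apply sq_le_sq'
              · nlinarith [sq_nonneg (∑ ε : Fin n → Bool, (Z ε)^2), mul_nonneg hAnn hZ3nn]
              · exact hCS1
          _ = A^2 * (∑ ε : Fin n → Bool, |Z ε|^3)^2 := by ring
          _ ≤ A^2 * ((∑ ε : Fin n → Bool, (Z ε)^2) * ∑ ε : Fin n → Bool, (Z ε)^4) := by
              apply mul_le_mul_of_nonneg_left hCS2 (sq_nonneg A)
          _ ≤ A^2 * (((2:ℝ)^n * σ2) * (3 * 2^n * σ2^2)) := by
              apply mul_le_mul_of_nonneg_left _ (sq_nonneg A)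
              rw [hM2]
              apply mul_le_mul_of_nonneg_left hM4 (by positivity)
      have hexpand : ((2:ℝ)^n * σ2)^4 = ((2:ℝ)^n*σ2)^3 * (2^n * σ2) := by ring
      -- divide by (2ⁿ σ2)³ > 0
      have hq : (0:ℝ) < ((2:ℝ)^n * σ2)^3 := by positivity
      have h2 : ((2:ℝ)^n*σ2)^3 * (2^n * σ2) ≤ ((2:ℝ)^n*σ2)^3 * (3 * A^2 / (2^n)) := by
        calc ((2:ℝ)^n*σ2)^3 * (2^n * σ2) = ((2:ℝ)^n * σ2)^4 := by ring
          _ ≤ A^2 * (((2:ℝ)^n * σ2) * (3 * 2^n * σ2^2)) := h1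
          _ = ((2:ℝ)^n*σ2)^3 * (3 * A^2 / (2^n)) := by field_simp
      have h3 : (2:ℝ)^n * σ2 ≤ 3 * A^2 / 2^n := le_of_mul_le_mul_left (by
        calc ((2:ℝ)^n*σ2)^3 * ((2:ℝ)^n * σ2) = ((2:ℝ)^n*σ2)^3 * (2^n * σ2) := rfl
          _ ≤ ((2:ℝ)^n*σ2)^3 * (3 * A^2 / (2^n)) := h2) hq
      calc (2:ℝ)^(2*n) * σ2 = 2^n * ((2:ℝ)^n * σ2) := by rw [two_mul, pow_add]; ring
        _ ≤ 2^n * (3 * A^2 / 2^n) := by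
            apply mul_le_mul_of_nonneg_left h3 (le_of_lt h2n)
        _ = 3 * A^2 := by field_simp
    -- conclude: (2ⁿ √σ2)² ≤ (√3 A)²
    have lhs_sq : ((2:ℝ)^n * Real.sqrt σ2)^2 = (2:ℝ)^(2*n) * σ2 := by
      rw [mul_pow, Real.sq_sqrt hσ2nn, two_mul, pow_add]; ring
    have rhs_sq : (Real.sqrt 3 * A)^2 = 3 * A^2 := by
      rw [mul_pow, Real.sq_sqrt (by norm_num : (3:ℝ) ≥ 0)]
    have hfin : ((2:ℝ)^n * Real.sqrt σ2)^2 ≤ (Real.sqrt 3 * A)^2 := by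
      rw [lhs_sq, rhs_sq]; exact key
    have h1nn : (0:ℝ) ≤ (2:ℝ)^n * Real.sqrt σ2 := by positivity
    have h2nn : (0:ℝ) ≤ Real.sqrt 3 * A := by positivity
    exact (pow_le_pow_iff_left₀ h1nn h2nn (by norm_num)).mp hfin



variable {Y : Type v} [NormedAddCommGroup Y] [NormedSpace ℝ Y]

/-- From the local L₂-structure we extract a globally defined bounded linear
retraction onto any given finite-dimensional subspace. -/
lemma exists_retraction {lam : ℝ} (hlam : 0 ≤ lam) (hY : IsLpSpaceWith 2 lam Y)
    (F₀ : Submodule ℝ Y) (hF₀ : FiniteDimensional ℝ F₀) :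
    ∃ P : Y →L[ℝ] F₀, (∀ y : F₀, P ↑y = y) ∧ ∀ y : Y, ‖P y‖ ≤ lam * ‖y‖ := by
  classical
  haveI := hF₀
  -- the directed index of finite-dimensional subspaces containing F₀
  let ιP : Submodule ℝ Y → Prop := fun D => FiniteDimensional ℝ D ∧ F₀ ≤ D
  let ι := {D : Submodule ℝ Y // ιP D}
  haveI : Nonempty ι := ⟨⟨F₀, hF₀, le_rfl⟩⟩
  letI : SemilatticeSup ι := Subtype.semilatticeSup (by
    intro D D' hD hD'
    haveI := hD.1; haveI := hD'.1
    exact ⟨Submodule.finiteDimensional_sup _ _, le_trans hD.2 le_sup_left⟩)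
  -- local projections
  have hlocal : ∀ D : ι, ∃ q : Y → ↥F₀,
      (∀ y z : Y, y ∈ D.1 → z ∈ D.1 → q (y + z) = q y + q z) ∧
      (∀ (a : ℝ) (y : Y), y ∈ D.1 → q (a • y) = a • q y) ∧
      (∀ y : Y, ‖q y‖ ≤ lam * ‖y‖) ∧
      (∀ y : ↥F₀, q ↑y = y) := by
    intro D
    obtain ⟨G, hDG, hGfd, v, hv⟩ := hY D.1 D.2.1
    haveI := hGfd
    have hF₀G : F₀ ≤ G := le_trans D.2.2 hDG
    set Epi := PiLp 2 fun _ : Fin (Module.finrank ℝ G) => ℝ with hEpi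
    set K : Submodule ℝ Epi :=
      (Submodule.comap G.subtype F₀).map ((v.toLinearEquiv : ↥G ≃ₗ[ℝ] Epi) : ↥G →ₗ[ℝ] Epi) with hK
    have hmemK : ∀ w : Epi, w ∈ K → ((v.symm w : ↥G) : Y) ∈ F₀ := by
      intro w hw
      obtain ⟨g, hg, hgw⟩ := Submodule.mem_map.mp hw
      have : v.symm w = g := by
        have : v g = w := hgw
        rw [← this]
        exact v.symm_apply_apply g
      rw [this]
      exact Submodule.mem_comap.mp hg
    have hmemval : ∀ g : ↥G, (↑(K.orthogonalProjectionOnto (v g)) : Epi) ∈ K :=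
      fun g => Submodule.coe_mem _
    -- the local projection
    refine ⟨fun y => if h : y ∈ G then
        ⟨((v.symm ↑(K.orthogonalProjectionOnto (v ⟨y, h⟩)) : ↥G) : Y),
          hmemK _ (hmemval _)⟩ else 0, ?_, ?_, ?_, ?_⟩
    · intro y z hy hz
      have hyG : y ∈ G := hDG hy
      have hzG : z ∈ G := hDG hz
      have hyzG : y + z ∈ G := G.add_mem hyG hzG
      simp only [dif_pos hyG, dif_pos hzG, dif_pos hyzG]
      apply Subtype.ext
      have h1 : (⟨y + z, hyzG⟩ : ↥G) = ⟨y, hyG⟩ + ⟨z, hzG⟩ := rfl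
      simp only [h1, map_add, Submodule.coe_add, AddSubmonoid.coe_add,
        AddSubgroup.coe_add]
    · intro a y hy
      have hyG : y ∈ G := hDG hy
      have hayG : a • y ∈ G := G.smul_mem a hyG
      simp only [dif_pos hyG, dif_pos hayG]
      apply Subtype.ext
      have h1 : (⟨a • y, hayG⟩ : ↥G) = a • ⟨y, hyG⟩ := rfl
      simp only [h1, _root_.map_smul, SetLike.val_smul]
    · intro y
      by_cases h : y ∈ G
      · simp only [dif_pos h]
        have e1 : ‖(⟨((v.symm ↑(K.orthogonalProjectionOnto (v ⟨y, h⟩)) : ↥G) : Y),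
            hmemK _ (hmemval _)⟩ : ↥F₀)‖
            = ‖(v.symm ↑(K.orthogonalProjectionOnto (v ⟨y, h⟩)) : ↥G)‖ := rfl
        rw [e1]
        have e2 : ‖(v.symm ↑(K.orthogonalProjectionOnto (v ⟨y, h⟩)) : ↥G)‖
            ≤ ‖(v.symm : Epi →L[ℝ] ↥G)‖ * ‖(↑(K.orthogonalProjectionOnto (v ⟨y, h⟩)) : Epi)‖ :=
          (v.symm : Epi →L[ℝ] ↥G).le_opNorm _
        have e3 : ‖(↑(K.orthogonalProjectionOnto (v ⟨y, h⟩)) : Epi)‖ ≤ ‖v ⟨y, h⟩‖ := by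
          calc ‖(↑(K.orthogonalProjectionOnto (v ⟨y, h⟩)) : Epi)‖
              = ‖K.orthogonalProjectionOnto (v ⟨y, h⟩)‖ := rfl
            _ ≤ ‖K.orthogonalProjectionOnto‖ * ‖v ⟨y, h⟩‖ := (K.orthogonalProjectionOnto).le_opNorm _
            _ ≤ 1 * ‖v ⟨y, h⟩‖ := by
                apply mul_le_mul_of_nonneg_right (Submodule.orthogonalProjectionOnto_norm_le K) (norm_nonneg _)
            _ = ‖v ⟨y, h⟩‖ := one_mul _
        have e4 : ‖v ⟨y, h⟩‖ ≤ ‖(v : ↥G →L[ℝ] Epi)‖ * ‖(⟨y, h⟩ : ↥G)‖ :=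
          (v : ↥G →L[ℝ] Epi).le_opNorm _
        have e5 : ‖(⟨y, h⟩ : ↥G)‖ = ‖y‖ := rfl
        calc ‖(v.symm ↑(K.orthogonalProjectionOnto (v ⟨y, h⟩)) : ↥G)‖
            ≤ ‖(v.symm : Epi →L[ℝ] ↥G)‖ * ‖(↑(K.orthogonalProjectionOnto (v ⟨y, h⟩)) : Epi)‖ := e2
          _ ≤ ‖(v.symm : Epi →L[ℝ] ↥G)‖ * (‖(v : ↥G →L[ℝ] Epi)‖ * ‖y‖) := by
              refine mul_le_mul_of_nonneg_left ?_ (ContinuousLinearMap.opNorm_nonneg _)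
              calc ‖(↑(K.orthogonalProjectionOnto (v ⟨y, h⟩)) : Epi)‖ ≤ ‖v ⟨y, h⟩‖ := e3
                _ ≤ ‖(v : ↥G →L[ℝ] Epi)‖ * ‖y‖ := by rw [← e5]; exact e4
          _ = ‖(v : ↥G →L[ℝ] Epi)‖ * ‖(v.symm : Epi →L[ℝ] ↥G)‖ * ‖y‖ := by ring
          _ ≤ lam * ‖y‖ := mul_le_mul_of_nonneg_right hv (norm_nonneg _)
      · simp only [dif_neg h, norm_zero]
        positivity
    · intro y
      have h : (y : Y) ∈ G := hF₀G y.2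
      simp only [dif_pos h]
      have hvK : v ⟨↑y, h⟩ ∈ K := by
        apply Submodule.mem_map_of_mem
        exact Submodule.mem_comap.mpr y.2
      have hproj : (↑(K.orthogonalProjectionOnto (v ⟨↑y, h⟩)) : Epi) = v ⟨↑y, h⟩ := by
        have := Submodule.orthogonalProjectionOnto_mem_subspace_eq_self (K := K) ⟨v ⟨↑y, h⟩, hvK⟩
        calc (↑(K.orthogonalProjectionOnto (v ⟨↑y, h⟩)) : Epi)
            = ↑(K.orthogonalProjectionOnto ↑(⟨v ⟨↑y, h⟩, hvK⟩ : K)) := rfl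
          _ = ↑(⟨v ⟨↑y, h⟩, hvK⟩ : K) := by rw [this]
          _ = v ⟨↑y, h⟩ := rfl
      apply Subtype.ext
      show ((v.symm ↑(K.orthogonalProjectionOnto (v ⟨↑y, h⟩)) : ↥G) : Y) = ↑y
      have h2 : v.symm ↑(K.orthogonalProjectionOnto (v ⟨↑y, h⟩)) = ⟨↑y, h⟩ := by
        rw [hproj]; exact v.symm_apply_apply _
      rw [h2]
  choose q hqadd hqsmul hqnorm hqfix using hlocal
  -- the ultrafilter
  letI U : Ultrafilter ι := Ultrafilter.of Filter.atTop
  have hUle : (↑U : Filter ι) ≤ Filter.atTop := Ultrafilter.of_le _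
  -- limits exist in compact balls
  have hex : ∀ y : Y, ∃ p : ↥F₀,
      Filter.Tendsto (fun D : ι => q D y) ↑U (𝓝 p) ∧ ‖p‖ ≤ lam * ‖y‖ := by
    intro y
    have hcpt : IsCompact (Metric.closedBall (0 : ↥F₀) (lam * ‖y‖)) :=
      isCompact_closedBall _ _
    have hle : ↑(U.map (fun D : ι => q D y)) ≤ Filter.principal (Metric.closedBall (0 : ↥F₀) (lam * ‖y‖)) := by
      rw [Ultrafilter.coe_map]
      refine Filter.le_principal_iff.mpr (Filter.mem_map.mpr (Filter.univ_mem' ?_))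
      intro D
      simp only [Set.mem_preimage]
      rw [Metric.mem_closedBall, dist_zero_right]
      exact hqnorm D y
    obtain ⟨p, hp1, hp2⟩ := hcpt.ultrafilter_le_nhds (U.map (fun D : ι => q D y)) hle
    refine ⟨p, ?_, ?_⟩
    · rw [Filter.Tendsto, ← Ultrafilter.coe_map]; exact hp2
    · rw [Metric.mem_closedBall, dist_zero_right] at hp1; exact hp1
  choose Pf hPtend hPnorm using hex
  -- linearity
  have hDmem : ∀ y : Y, ∃ D : ι, y ∈ D.1 := by
    intro y
    haveI : FiniteDimensional ℝ (Submodule.span ℝ ({y} : Set Y)) :=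
      FiniteDimensional.span_of_finite ℝ (Set.finite_singleton _)
    refine ⟨⟨F₀ ⊔ Submodule.span ℝ ({y} : Set Y),
      ⟨Submodule.finiteDimensional_sup _ _, le_sup_left⟩⟩,
      Submodule.mem_sup_right (Submodule.mem_span_singleton_self y)⟩
  have hadd : ∀ y z : Y, Pf (y + z) = Pf y + Pf z := by
    intro y z
    obtain ⟨Dy, hDy⟩ := hDmem y
    obtain ⟨Dz, hDz⟩ := hDmem z
    have hev : ∀ᶠ D in (↑U : Filter ι), q D (y + z) = q D y + q D z := by
      apply Filter.Eventually.filter_mono hUle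
      rw [Filter.eventually_atTop]
      refine ⟨Dy ⊔ Dz, fun D hD => ?_⟩
      have hyD : y ∈ D.1 := (le_trans (le_sup_left : Dy ≤ Dy ⊔ Dz) hD : Dy ≤ D) hDy
      have hzD : z ∈ D.1 := (le_trans (le_sup_right : Dz ≤ Dy ⊔ Dz) hD : Dz ≤ D) hDz
      exact hqadd D y z hyD hzD
    have t1 : Filter.Tendsto (fun D : ι => q D (y + z)) ↑U (𝓝 (Pf y + Pf z)) :=
      Filter.Tendsto.congr' (Filter.EventuallyEq.symm hev) ((hPtend y).add (hPtend z))
    exact tendsto_nhds_unique (hPtend (y + z)) t1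
  have hsmul : ∀ (a : ℝ) (y : Y), Pf (a • y) = a • Pf y := by
    intro a y
    obtain ⟨Dy, hDy⟩ := hDmem y
    have hev : ∀ᶠ D in (↑U : Filter ι), q D (a • y) = a • q D y := by
      apply Filter.Eventually.filter_mono hUle
      rw [Filter.eventually_atTop]
      refine ⟨Dy, fun D hD => hqsmul D a y ((hD : Dy ≤ D) hDy)⟩
    have t1 : Filter.Tendsto (fun D : ι => q D (a • y)) ↑U (𝓝 (a • Pf y)) :=
      Filter.Tendsto.congr' (Filter.EventuallyEq.symm hev) ((hPtend y).const_smul a)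
    exact tendsto_nhds_unique (hPtend (a • y)) t1
  have hfix : ∀ y : ↥F₀, Pf ↑y = y := by
    intro y
    have t1 : Filter.Tendsto (fun D : ι => q D ↑y) ↑U (𝓝 y) := by
      have : (fun D : ι => q D ↑y) = fun _ => y := funext fun D => hqfix D y
      rw [this]
      exact tendsto_const_nhds
    exact tendsto_nhds_unique (hPtend ↑y) t1
  refine ⟨LinearMap.mkContinuous
    { toFun := Pf, map_add' := hadd, map_smul' := hsmul } lam (fun y => hPnorm y), hfix, fun y => hPnorm y⟩


section Helpers
variable {X : Type u} [NormedAddCommGroup X] [NormedSpace ℝ X]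

lemma weakNorm_nonneg {Z : Type u} [NormedAddCommGroup Z] [NormedSpace ℝ Z]
    (q : ℝ≥0∞) (m : ℕ) (x : ℕ → Z) : 0 ≤ weakNorm q m x := by
  unfold weakNorm
  split
  · exact Real.iSup_nonneg fun i => norm_nonneg _
  · exact Real.iSup_nonneg fun φ => Real.rpow_nonneg
      (Finset.sum_nonneg fun i _ => Real.rpow_nonneg (abs_nonneg _) _) _

lemma sum_abs_le_weakNorm_one {m : ℕ} {x : ℕ → X} (φ₀ : X →L[ℝ] ℝ) (hφ₀ : ‖φ₀‖ ≤ 1) :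
    ∑ i ∈ Finset.range m, |φ₀ (x i)| ≤ weakNorm 1 m x := by
  unfold weakNorm
  rw [if_neg (by simp : (1:ℝ≥0∞) ≠ ∞)]
  simp only [ENNReal.toReal_one, Real.rpow_one, one_div_one]
  have hbdd : BddAbove (Set.range fun φ : {φ : X →L[ℝ] ℝ // ‖φ‖ ≤ 1} =>
      ∑ i ∈ Finset.range m, |φ.1 (x i)|) := by
    refine ⟨∑ i ∈ Finset.range m, ‖x i‖, ?_⟩
    rintro _ ⟨φ, rfl⟩
    refine Finset.sum_le_sum fun i _ => ?_
    calc |φ.1 (x i)| = ‖φ.1 (x i)‖ := rfl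
      _ ≤ ‖φ.1‖ * ‖x i‖ := φ.1.le_opNorm _
      _ ≤ 1 * ‖x i‖ := mul_le_mul_of_nonneg_right φ.2 (norm_nonneg _)
      _ = ‖x i‖ := one_mul _
  exact le_ciSup hbdd ⟨φ₀, hφ₀⟩

lemma sum_abs_le_opNorm_mul_weakNorm_one {m : ℕ} {x : ℕ → X} (g : X →L[ℝ] ℝ) :
    ∑ i ∈ Finset.range m, |g (x i)| ≤ ‖g‖ * weakNorm 1 m x := by
  rcases eq_or_ne g 0 with rfl | hg
  · simp
  · have hgpos : 0 < ‖g‖ := norm_pos_iff.mpr hg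
    set φ₀ : X →L[ℝ] ℝ := ‖g‖⁻¹ • g with hφ₀def
    have hφ₀ : ‖φ₀‖ ≤ 1 := by
      refine ContinuousLinearMap.opNorm_le_bound _ zero_le_one fun w => ?_
      rw [hφ₀def]
      simp only [ContinuousLinearMap.smul_apply, smul_eq_mul, norm_mul, norm_inv, norm_norm]
      rw [one_mul, mul_comm]
      have hb : ‖g w‖ ≤ ‖g‖ * ‖w‖ := g.le_opNorm w
      calc ‖g w‖ * ‖g‖⁻¹ ≤ (‖g‖ * ‖w‖) * ‖g‖⁻¹ :=
            mul_le_mul_of_nonneg_right hb (by positivity)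
        _ = ‖w‖ := by field_simp
    have h1 := sum_abs_le_weakNorm_one (x := x) (m := m) φ₀ hφ₀
    have h2 : ∀ i, |g (x i)| = ‖g‖ * |φ₀ (x i)| := by
      intro i
      rw [hφ₀def]
      simp only [ContinuousLinearMap.smul_apply, smul_eq_mul, abs_mul, abs_inv, abs_norm]
      rw [← mul_assoc, mul_inv_cancel₀ (ne_of_gt hgpos), one_mul]
    calc ∑ i ∈ Finset.range m, |g (x i)| = ‖g‖ * ∑ i ∈ Finset.range m, |φ₀ (x i)| := by
          rw [Finset.mul_sum]; exact Finset.sum_congr rfl fun i _ => h2 i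
      _ ≤ ‖g‖ * weakNorm 1 m x := mul_le_mul_of_nonneg_left h1 (norm_nonneg _)

lemma weakNorm_two_le {Z : Type u} [NormedAddCommGroup Z] [NormedSpace ℝ Z]
    {M : ℕ} {φf : ℕ → Z} {K : ℝ} (hK : 0 ≤ K)
    (h : ∀ Φ : {Φ : Z →L[ℝ] ℝ // ‖Φ‖ ≤ 1},
      ∑ j ∈ Finset.range M, (Φ.1 (φf j))^2 ≤ K^2) :
    weakNorm 2 M φf ≤ K := by
  haveI : Nonempty {Φ : Z →L[ℝ] ℝ // ‖Φ‖ ≤ 1} := ⟨⟨0, by simp⟩⟩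
  unfold weakNorm
  rw [if_neg (by simp : (2:ℝ≥0∞) ≠ ∞)]
  have h2 : (2:ℝ≥0∞).toReal = (2:ℝ) := by simp
  refine ciSup_le (α := ℝ) ?_
  intro Φ
  rw [h2]
  have hsum : ∑ j ∈ Finset.range M, |Φ.1 (φf j)| ^ (2:ℝ)
      = ∑ j ∈ Finset.range M, (Φ.1 (φf j))^2 := by
    refine Finset.sum_congr rfl fun j _ => ?_
    rw [Real.rpow_two, sq_abs]
  rw [hsum]
  have hnn : 0 ≤ ∑ j ∈ Finset.range M, (Φ.1 (φf j))^2 :=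
    Finset.sum_nonneg fun j _ => sq_nonneg _
  calc (∑ j ∈ Finset.range M, (Φ.1 (φf j))^2) ^ ((1:ℝ)/2)
      ≤ (K^2) ^ ((1:ℝ)/2) := Real.rpow_le_rpow hnn (h Φ) (by norm_num)
    _ = K := by rw [← Real.sqrt_eq_rpow, Real.sqrt_sq hK]

lemma weakNorm_two_nonempty {Z : Type u} [NormedAddCommGroup Z] [NormedSpace ℝ Z] :
    Nonempty {Φ : Z →L[ℝ] ℝ // ‖Φ‖ ≤ 1} :=
  ⟨⟨0, by simp⟩⟩

lemma lpNormFin_two_le {M : ℕ} {z : ℕ → X} (h : ∀ j < M, ‖z j‖ ≤ 1) :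
    lpNormFin 2 M z ≤ Real.sqrt M := by
  unfold lpNormFin
  rw [if_neg (by simp : (2:ℝ≥0∞) ≠ ∞)]
  have h2 : (2:ℝ≥0∞).toReal = (2:ℝ) := by simp
  rw [h2]
  have hsum : ∑ j ∈ Finset.range M, ‖z j‖ ^ (2:ℝ) ≤ (M:ℝ) := by
    calc ∑ j ∈ Finset.range M, ‖z j‖ ^ (2:ℝ) ≤ ∑ _j ∈ Finset.range M, (1:ℝ) := by
          refine Finset.sum_le_sum fun j hj => ?_
          rw [Real.rpow_two]
          have := h j (Finset.mem_range.mp hj)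
          nlinarith [norm_nonneg (z j)]
      _ = (M:ℝ) := by simp
  have hnn : 0 ≤ ∑ j ∈ Finset.range M, ‖z j‖ ^ (2:ℝ) :=
    Finset.sum_nonneg fun j _ => Real.rpow_nonneg (norm_nonneg _) _
  calc (∑ j ∈ Finset.range M, ‖z j‖ ^ (2:ℝ)) ^ ((1:ℝ)/2)
      ≤ (M:ℝ) ^ ((1:ℝ)/2) := Real.rpow_le_rpow hnn hsum (by norm_num)
    _ = Real.sqrt M := (Real.sqrt_eq_rpow _).symm

lemma lpNormFin_nonneg {M : ℕ} {z : ℕ → X} : 0 ≤ lpNormFin 2 M z := by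
  unfold lpNormFin
  rw [if_neg (by simp : (2:ℝ≥0∞) ≠ ∞)]
  exact Real.rpow_nonneg (Finset.sum_nonneg fun j _ => Real.rpow_nonneg (norm_nonneg _) _) _

lemma conjExp_two : conjExp 2 = 2 := by
  unfold conjExp
  rw [ENNReal.one_sub_inv_two, inv_inv]

lemma exists_near_norming (g : X →L[ℝ] ℝ) {δ : ℝ} (hδ : 0 < δ) :
    ∃ z : X, ‖z‖ ≤ 1 ∧ ‖g‖ - δ ≤ g z := by
  rcases le_or_gt ‖g‖ δ with h | h
  · exact ⟨0, by simp, by simp; linarith⟩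
  · by_contra hc
    push_neg at hc
    have hbound : ∀ z : X, ‖g z‖ ≤ (‖g‖ - δ) * ‖z‖ := by
      intro z
      rcases eq_or_ne z 0 with rfl | hz
      · simp
      · have hznorm : 0 < ‖z‖ := norm_pos_iff.mpr hz
        set w : X := ‖z‖⁻¹ • z with hwdef
        have hw : ‖w‖ ≤ 1 := by
          rw [hwdef, norm_smul, norm_inv, norm_norm, inv_mul_cancel₀ (ne_of_gt hznorm)]
        have h1 : g w < ‖g‖ - δ := hc w hw
        have h2 : g (-w) < ‖g‖ - δ := hc (-w) (by rwa [norm_neg])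
        rw [map_neg] at h2
        have habs : |g w| ≤ ‖g‖ - δ := abs_le.mpr ⟨by linarith, le_of_lt h1⟩
        have hgw : g w = ‖z‖⁻¹ * g z := by rw [hwdef]; simp
        rw [hgw, abs_mul, abs_inv, abs_norm] at habs
        calc ‖g z‖ = |g z| := rfl
          _ = ‖z‖ * (‖z‖⁻¹ * |g z|) := by
              field_simp
          _ ≤ ‖z‖ * (‖g‖ - δ) := mul_le_mul_of_nonneg_left habs (norm_nonneg _)
          _ = (‖g‖ - δ) * ‖z‖ := mul_comm _ _
    have := ContinuousLinearMap.opNorm_le_bound g (by linarith [norm_nonneg g]) hbound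
    linarith

lemma sum_range_eq_sum_bool {n M : ℕ} (e : (Fin n → Bool) ≃ Fin M) (F : ℕ → ℝ)
    (G : (Fin n → Bool) → ℝ) (hFG : ∀ (j : ℕ) (h : j < M), F j = G (e.symm ⟨j, h⟩)) :
    ∑ j ∈ Finset.range M, F j = ∑ ε : Fin n → Bool, G ε := by
  rw [← Fin.sum_univ_eq_sum_range, ← Equiv.sum_comp e (fun j : Fin M => F ↑j)]
  refine Finset.sum_congr rfl fun ε _ => ?_
  rw [hFG _ (e ε).isLt]
  congr 1
  rw [Fin.eta, Equiv.symm_apply_apply]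

end Helpers

end Stmt6Aux

/-- If `X` has type 2 and `Y` is an `L_2`-space, then
`D_2(X,Y) ⊆ Π_1(X,Y)`. -/
theorem stmt6 {X : Type u} {Y : Type v} [NormedAddCommGroup X] [NormedSpace ℝ X]
    [CompleteSpace X] [NormedAddCommGroup Y] [NormedSpace ℝ Y] [CompleteSpace Y]
    (hX : HasTypeP 2 X) (hY : IsLpSpace 2 Y) (u : X →L[ℝ] Y)
    (hu : IsCohenStrong 2 u) :
    IsPSumming 1 u := by
  classical
  rw [IsPSumming, if_neg (by simp : (1:ℝ≥0∞) ≠ ∞)]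
  intro x hx
  obtain ⟨B, hB⟩ := hx
  obtain ⟨lam, hlam1, hYlam⟩ := hY
  obtain ⟨C, hC0, hC⟩ := hu
  have hlam0 : (0:ℝ) ≤ lam := le_of_lt (lt_trans zero_lt_one hlam1)
  have hB0 : (0:ℝ) ≤ B := le_trans (Stmt6Aux.weakNorm_nonneg 1 0 x) (hB 0)
  have key : ∀ m : ℕ, ∑ i ∈ Finset.range m, ‖u (x i)‖
      ≤ Real.sqrt 3 * (lam * (lam * (C * B))) := by
    intro m
    set E : Submodule ℝ Y := Submodule.span ℝ (Set.range (fun i : Fin m => u (x i))) with hE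
    have hEfd : FiniteDimensional ℝ E := FiniteDimensional.span_of_finite ℝ (Set.finite_range _)
    obtain ⟨F₀, hEF₀, hF₀fd, vex⟩ := hYlam E hEfd
    haveI := hF₀fd
    set n : ℕ := Module.finrank ℝ F₀ with hn
    obtain ⟨v, hvprod⟩ := vex
    set a : ℝ := ‖(v : ↥F₀ →L[ℝ] PiLp 2 fun _ : Fin n => ℝ)‖ with ha
    set b : ℝ := ‖(v.symm : (PiLp 2 fun _ : Fin n => ℝ) →L[ℝ] ↥F₀)‖ with hbdef
    have hab : a * b ≤ lam := hvprod
    have ha0 : 0 ≤ a := ContinuousLinearMap.opNorm_nonneg _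
    have hb0 : 0 ≤ b := ContinuousLinearMap.opNorm_nonneg _
    obtain ⟨P, hPfix, hPnorm⟩ := Stmt6Aux.exists_retraction hlam0 hYlam F₀ hF₀fd
    have hPop : ‖P‖ ≤ lam := ContinuousLinearMap.opNorm_le_bound _ hlam0 hPnorm
    -- the coordinate functionals
    set ψ : Fin n → (Y →L[ℝ] ℝ) := fun k =>
      (innerSL ℝ (EuclideanSpace.single k (1:ℝ))).comp
        ((v : ↥F₀ →L[ℝ] PiLp 2 fun _ : Fin n => ℝ).comp P) with hψ
    have hψ_apply : ∀ (k : Fin n) (y : Y), ψ k y = (v (P y)) k := by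
      intro k y
      simp only [hψ, ContinuousLinearMap.comp_apply, innerSL_apply_apply,
        ContinuousLinearEquiv.coe_coe]
      rw [EuclideanSpace.inner_single_left]
      simp
    set Ψ : (Fin n → Bool) → (Y →L[ℝ] ℝ) := fun ε => ∑ k, Stmt6Aux.sg ε k • ψ k with hΨ
    have hΨ_apply : ∀ ε (y : Y), Ψ ε y = ∑ k, Stmt6Aux.sg ε k * (v (P y)) k := by
      intro ε y
      rw [hΨ]
      simp only [ContinuousLinearMap.sum_apply, ContinuousLinearMap.smul_apply, smul_eq_mul]
      exact Finset.sum_congr rfl fun k _ => by rw [hψ_apply]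
    -- ℓ²-combinations of ψ are bounded
    have hcomb : ∀ w : Fin n → ℝ,
        ‖∑ k, w k • ψ k‖ ≤ a * lam * Real.sqrt (∑ k, (w k)^2) := by
      intro w
      set wv : EuclideanSpace ℝ (Fin n) := (WithLp.equiv 2 _).symm w with hwv
      have hwnorm : ‖wv‖ = Real.sqrt (∑ k, (w k)^2) := by
        rw [EuclideanSpace.norm_eq]
        congr 1
        refine Finset.sum_congr rfl fun k _ => ?_
        rw [Real.norm_eq_abs, sq_abs]
        rfl
      have hident : (∑ k, w k • ψ k) = (innerSL ℝ wv).comp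
          ((v : ↥F₀ →L[ℝ] PiLp 2 fun _ : Fin n => ℝ).comp P) := by
        ext y
        simp only [ContinuousLinearMap.sum_apply, ContinuousLinearMap.smul_apply,
          smul_eq_mul, ContinuousLinearMap.comp_apply, innerSL_apply_apply,
          ContinuousLinearEquiv.coe_coe]
        rw [PiLp.inner_apply]
        refine Finset.sum_congr rfl fun k _ => ?_
        rw [hψ_apply]
        simp only [RCLike.inner_apply, starRingEnd_apply, star_trivial]
        exact mul_comm _ _
      rw [hident]
      calc ‖(innerSL ℝ wv).comp ((v : ↥F₀ →L[ℝ] PiLp 2 fun _ : Fin n => ℝ).comp P)‖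
          ≤ ‖innerSL ℝ wv‖ * ‖(v : ↥F₀ →L[ℝ] PiLp 2 fun _ : Fin n => ℝ).comp P‖ :=
            ContinuousLinearMap.opNorm_comp_le _ _
        _ ≤ ‖innerSL ℝ wv‖ * (a * lam) := by
            refine mul_le_mul_of_nonneg_left ?_ (ContinuousLinearMap.opNorm_nonneg _)
            calc ‖(v : ↥F₀ →L[ℝ] PiLp 2 fun _ : Fin n => ℝ).comp P‖
                ≤ ‖(v : ↥F₀ →L[ℝ] PiLp 2 fun _ : Fin n => ℝ)‖ * ‖P‖ :=
                  ContinuousLinearMap.opNorm_comp_le _ _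
              _ ≤ a * lam := mul_le_mul_of_nonneg_left hPop ha0
        _ = a * lam * Real.sqrt (∑ k, (w k)^2) := by
            rw [innerSL_apply_norm, hwnorm]; ring
    -- membership of the images
    have hmem : ∀ i ∈ Finset.range m, u (x i) ∈ F₀ := fun i hi =>
      hEF₀ (Submodule.subset_span ⟨⟨i, Finset.mem_range.mp hi⟩, rfl⟩)
    -- Khintchine lower bound per index
    have hkh : ∀ i ∈ Finset.range m,
        (2^n : ℝ) * ‖u (x i)‖ ≤ Real.sqrt 3 * b *
          ∑ ε : Fin n → Bool, |Ψ ε (u (x i))| := by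
      intro i hi
      set yF : ↥F₀ := ⟨u (x i), hmem i hi⟩ with hyF
      set c : Fin n → ℝ := fun k => (v yF) k with hc
      have hPy : P (u (x i)) = yF := hPfix yF
      have hΨy : ∀ ε, Ψ ε (u (x i)) = ∑ k, Stmt6Aux.sg ε k * c k := by
        intro ε
        rw [hΨ_apply]
        refine Finset.sum_congr rfl fun k _ => ?_
        rw [hPy]
      have h1 : ‖u (x i)‖ ≤ b * ‖v yF‖ := by
        calc ‖u (x i)‖ = ‖yF‖ := rfl
          _ = ‖v.symm (v yF)‖ := by rw [v.symm_apply_apply]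
          _ ≤ b * ‖v yF‖ := (v.symm : (PiLp 2 fun _ : Fin n => ℝ) →L[ℝ] ↥F₀).le_opNorm _
      have h2 : ‖v yF‖ = Real.sqrt (∑ k, (c k)^2) := by
        rw [EuclideanSpace.norm_eq]
        congr 1
        refine Finset.sum_congr rfl fun k _ => ?_
        rw [Real.norm_eq_abs, sq_abs]
      have h3 := Stmt6Aux.khintchine c
      calc (2^n : ℝ) * ‖u (x i)‖ ≤ (2^n : ℝ) * (b * Real.sqrt (∑ k, (c k)^2)) := by
            refine mul_le_mul_of_nonneg_left ?_ (by positivity)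
            rw [← h2]; exact h1
        _ = b * ((2^n : ℝ) * Real.sqrt (∑ k, (c k)^2)) := by ring
        _ ≤ b * (Real.sqrt 3 * ∑ ε : Fin n → Bool, |∑ k, Stmt6Aux.sg ε k * c k|) :=
            mul_le_mul_of_nonneg_left h3 hb0
        _ = Real.sqrt 3 * b * ∑ ε : Fin n → Bool, |Ψ ε (u (x i))| := by
            rw [Finset.sum_congr rfl fun ε _ => congrArg abs (hΨy ε).symm]; ring
    -- the crucial claim via the Cohen hypothesis
    set M : ℕ := 2^n with hM
    have hMcard : Fintype.card (Fin n → Bool) = M := Stmt6Aux.card_bool_fun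
    set e : (Fin n → Bool) ≃ Fin M := Fintype.equivFinOfCardEq hMcard with he
    have hM0 : (0:ℝ) < (M:ℝ) := by
      rw [hM]; push_cast; positivity
    have hsqM0 : (0:ℝ) < Real.sqrt M := Real.sqrt_pos.mpr hM0
    have claim : (M:ℝ)⁻¹ * ∑ ε : Fin n → Bool, ‖(Ψ ε).comp u‖ ≤ C * (a * lam) := by
      refine le_of_forall_pos_le_add fun δ hδ => ?_
      have hzch : ∀ ε : Fin n → Bool, ∃ z : X, ‖z‖ ≤ 1 ∧ ‖(Ψ ε).comp u‖ - δ ≤ ((Ψ ε).comp u) z :=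
        fun ε => Stmt6Aux.exists_near_norming _ hδ
      choose zf hz1 hz2 using hzch
      set zseq : ℕ → X := fun j => if h : j < M then zf (e.symm ⟨j, h⟩) else 0 with hzseq
      set φseq : ℕ → (Y →L[ℝ] ℝ) :=
        fun j => if h : j < M then ((M:ℝ)⁻¹) • Ψ (e.symm ⟨j, h⟩) else 0 with hφseq
      have main := hC M zseq φseq
      -- lower bound for the left-hand side
      have hL : (M:ℝ)⁻¹ * (∑ ε : Fin n → Bool, ‖(Ψ ε).comp u‖) - δ
          ≤ ∑ j ∈ Finset.range M, |φseq j (u (zseq j))| := by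
        have heq : ∑ j ∈ Finset.range M, |φseq j (u (zseq j))|
            = ∑ ε : Fin n → Bool, |(((M:ℝ)⁻¹) • Ψ ε) (u (zf ε))| := by
          refine Stmt6Aux.sum_range_eq_sum_bool e _ _ fun j h => ?_
          simp only [hzseq, hφseq, dif_pos h]
        rw [heq]
        have hper : ∀ ε : Fin n → Bool,
            (M:ℝ)⁻¹ * (‖(Ψ ε).comp u‖ - δ) ≤ |(((M:ℝ)⁻¹) • Ψ ε) (u (zf ε))| := by
          intro ε
          have h1 : Ψ ε (u (zf ε)) = ((Ψ ε).comp u) (zf ε) := rfl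
          calc (M:ℝ)⁻¹ * (‖(Ψ ε).comp u‖ - δ) ≤ (M:ℝ)⁻¹ * (((Ψ ε).comp u) (zf ε)) :=
                mul_le_mul_of_nonneg_left (hz2 ε) (by positivity)
            _ ≤ |(M:ℝ)⁻¹ * (((Ψ ε).comp u) (zf ε))| := le_abs_self _
            _ = |(((M:ℝ)⁻¹) • Ψ ε) (u (zf ε))| := by
                rw [ContinuousLinearMap.smul_apply, smul_eq_mul, h1]
        calc (M:ℝ)⁻¹ * (∑ ε : Fin n → Bool, ‖(Ψ ε).comp u‖) - δ
            = ∑ ε : Fin n → Bool, (M:ℝ)⁻¹ * (‖(Ψ ε).comp u‖ - δ) := by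
              rw [Finset.sum_congr rfl fun (ε : Fin n → Bool) _ =>
                (mul_sub ((M:ℝ)⁻¹) _ _ : (M:ℝ)⁻¹ * (‖(Ψ ε).comp u‖ - δ) = _)]
              rw [Finset.sum_sub_distrib, ← Finset.mul_sum, Finset.sum_const,
                Finset.card_univ, hMcard]
              have : (M : ℝ) ≠ 0 := ne_of_gt hM0
              rw [nsmul_eq_mul]
              field_simp
          _ ≤ ∑ ε : Fin n → Bool, |(((M:ℝ)⁻¹) • Ψ ε) (u (zf ε))| :=
              Finset.sum_le_sum fun ε _ => hper ε
      -- upper bounds for the right-hand side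
      have hlp : lpNormFin 2 M zseq ≤ Real.sqrt M := by
        refine Stmt6Aux.lpNormFin_two_le fun j hj => ?_
        simp only [hzseq, dif_pos hj]
        exact hz1 _
      have hwk : weakNorm (conjExp 2) M φseq ≤ a * lam * (Real.sqrt M)⁻¹ := by
        rw [Stmt6Aux.conjExp_two]
        refine Stmt6Aux.weakNorm_two_le (by positivity) ?_
        intro Φ
        set t : (Fin n → Bool) → ℝ := fun ε => Φ.1 (Ψ ε) with ht
        have hsum : ∑ j ∈ Finset.range M, (Φ.1 (φseq j))^2
            = ∑ ε : Fin n → Bool, ((M:ℝ)⁻¹ * t ε)^2 := by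
          refine Stmt6Aux.sum_range_eq_sum_bool e _ _ fun j h => ?_
          simp only [hφseq, dif_pos h, _root_.map_smul, smul_eq_mul, ht]
        rw [hsum]
        set w : Fin n → ℝ := fun k => ∑ ε : Fin n → Bool, t ε * Stmt6Aux.sg ε k with hw
        have hswap : ∑ ε : Fin n → Bool, t ε • Ψ ε = ∑ k, w k • ψ k := by
          rw [hΨ]
          calc ∑ ε : Fin n → Bool, t ε • ∑ k, Stmt6Aux.sg ε k • ψ k
              = ∑ ε : Fin n → Bool, ∑ k, (t ε * Stmt6Aux.sg ε k) • ψ k := by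
                refine Finset.sum_congr rfl fun ε _ => ?_
                rw [Finset.smul_sum]
                exact Finset.sum_congr rfl fun k _ => by rw [smul_smul]
            _ = ∑ k, ∑ ε : Fin n → Bool, (t ε * Stmt6Aux.sg ε k) • ψ k := Finset.sum_comm
            _ = ∑ k, w k • ψ k := by
                refine Finset.sum_congr rfl fun k _ => ?_
                rw [hw, ← Finset.sum_smul]
        have hT : ∑ ε : Fin n → Bool, (t ε)^2 = Φ.1 (∑ ε : Fin n → Bool, t ε • Ψ ε) := by
          rw [map_sum]
          refine Finset.sum_congr rfl fun ε _ => ?_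
          rw [_root_.map_smul, smul_eq_mul, ht, sq]
        have hT2nn : (0:ℝ) ≤ ∑ ε : Fin n → Bool, (t ε)^2 :=
          Finset.sum_nonneg fun ε _ => sq_nonneg _
        have hW2 : ∑ k, (w k)^2 ≤ (M:ℝ) * ∑ ε : Fin n → Bool, (t ε)^2 := by
          set W2 : ℝ := ∑ k, (w k)^2 with hW2def
          have hW2nn : 0 ≤ W2 := Finset.sum_nonneg fun k _ => sq_nonneg _
          have h1 : W2 = ∑ ε : Fin n → Bool, t ε * (∑ k, Stmt6Aux.sg ε k * w k) := by
            calc W2 = ∑ k, w k * w k := by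
                  refine Finset.sum_congr rfl fun k _ => sq (w k) ▸ rfl
              _ = ∑ k, ∑ ε : Fin n → Bool, (t ε * Stmt6Aux.sg ε k) * w k := by
                  refine Finset.sum_congr rfl fun k _ => ?_
                  rw [hw]
                  rw [← Finset.sum_mul]
              _ = ∑ ε : Fin n → Bool, ∑ k, (t ε * Stmt6Aux.sg ε k) * w k := Finset.sum_comm
              _ = ∑ ε : Fin n → Bool, t ε * (∑ k, Stmt6Aux.sg ε k * w k) := by
                  refine Finset.sum_congr rfl fun ε _ => ?_
                  rw [Finset.mul_sum]
                  exact Finset.sum_congr rfl fun k _ => by ring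
          have h2 : W2^2 ≤ (∑ ε : Fin n → Bool, (t ε)^2) *
              (∑ ε : Fin n → Bool, (∑ k, Stmt6Aux.sg ε k * w k)^2) := by
            rw [h1]
            exact Finset.sum_mul_sq_le_sq_mul_sq _ _ _
          have h3 : ∑ ε : Fin n → Bool, (∑ k, Stmt6Aux.sg ε k * w k)^2
              = 2^n * ∑ k, (w k)^2 := Stmt6Aux.moment_two w Finset.univ
          have h4 : W2^2 ≤ (∑ ε : Fin n → Bool, (t ε)^2) * ((M:ℝ) * W2) := by
            calc W2^2 ≤ (∑ ε : Fin n → Bool, (t ε)^2) *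
                (∑ ε : Fin n → Bool, (∑ k, Stmt6Aux.sg ε k * w k)^2) := h2
              _ = (∑ ε : Fin n → Bool, (t ε)^2) * ((M:ℝ) * W2) := by
                  rw [h3, hW2def]
                  congr 2
                  rw [hM]; push_cast; ring
          rcases eq_or_lt_of_le hW2nn with hz | hpos
          · rw [← hz]; positivity
          · have := h4
            have h5 : W2 * W2 ≤ ((∑ ε : Fin n → Bool, (t ε)^2) * (M:ℝ)) * W2 := by
              calc W2 * W2 = W2^2 := (sq W2).symm
                _ ≤ (∑ ε : Fin n → Bool, (t ε)^2) * ((M:ℝ) * W2) := h4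
                _ = ((∑ ε : Fin n → Bool, (t ε)^2) * (M:ℝ)) * W2 := by ring
            have := le_of_mul_le_mul_right h5 hpos
            linarith
        have hTbound : ∑ ε : Fin n → Bool, (t ε)^2 ≤ (a*lam)^2 * (M:ℝ) := by
          have h4 : ∑ ε : Fin n → Bool, (t ε)^2 ≤ ‖∑ k, w k • ψ k‖ := by
            rw [hT]
            calc Φ.1 (∑ ε : Fin n → Bool, t ε • Ψ ε)
                ≤ |Φ.1 (∑ ε : Fin n → Bool, t ε • Ψ ε)| := le_abs_self _
              _ ≤ ‖Φ.1‖ * ‖∑ ε : Fin n → Bool, t ε • Ψ ε‖ := Φ.1.le_opNorm _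
              _ ≤ 1 * ‖∑ ε : Fin n → Bool, t ε • Ψ ε‖ :=
                  mul_le_mul_of_nonneg_right Φ.2 (norm_nonneg _)
              _ = ‖∑ ε : Fin n → Bool, t ε • Ψ ε‖ := one_mul _
              _ = ‖∑ k, w k • ψ k‖ := by rw [hswap]
          have h5 : ‖∑ k, w k • ψ k‖ ≤ a * lam * (Real.sqrt (M:ℝ) *
              Real.sqrt (∑ ε : Fin n → Bool, (t ε)^2)) := by
            calc ‖∑ k, w k • ψ k‖ ≤ a * lam * Real.sqrt (∑ k, (w k)^2) := hcomb w
              _ ≤ a * lam * Real.sqrt ((M:ℝ) * ∑ ε : Fin n → Bool, (t ε)^2) := by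
                  refine mul_le_mul_of_nonneg_left (Real.sqrt_le_sqrt hW2) (by positivity)
              _ = a * lam * (Real.sqrt (M:ℝ) * Real.sqrt (∑ ε : Fin n → Bool, (t ε)^2)) := by
                  rw [Real.sqrt_mul hM0.le]
          set T2 : ℝ := ∑ ε : Fin n → Bool, (t ε)^2 with hT2def
          have h6 : T2 ≤ a * lam * Real.sqrt (M:ℝ) * Real.sqrt T2 := by
            calc T2 ≤ ‖∑ k, w k • ψ k‖ := h4
              _ ≤ a * lam * (Real.sqrt (M:ℝ) * Real.sqrt T2) := h5
              _ = a * lam * Real.sqrt (M:ℝ) * Real.sqrt T2 := by ring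
          rcases eq_or_lt_of_le hT2nn with hz | hpos
          · rw [← hz]; positivity
          · have hsT2 : 0 < Real.sqrt T2 := Real.sqrt_pos.mpr hpos
            have h7 : Real.sqrt T2 * Real.sqrt T2 ≤ (a * lam * Real.sqrt (M:ℝ)) * Real.sqrt T2 := by
              rw [Real.mul_self_sqrt hT2nn]
              exact h6
            have h8 : Real.sqrt T2 ≤ a * lam * Real.sqrt (M:ℝ) :=
              le_of_mul_le_mul_right h7 hsT2
            calc T2 = Real.sqrt T2 * Real.sqrt T2 := (Real.mul_self_sqrt hT2nn).symm
              _ ≤ (a * lam * Real.sqrt (M:ℝ)) * (a * lam * Real.sqrt (M:ℝ)) :=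
                  mul_le_mul h8 h8 (le_of_lt hsT2) (by positivity)
              _ = (a*lam)^2 * (Real.sqrt (M:ℝ) * Real.sqrt (M:ℝ)) := by ring
              _ = (a*lam)^2 * (M:ℝ) := by rw [Real.mul_self_sqrt hM0.le]
        calc ∑ ε : Fin n → Bool, ((M:ℝ)⁻¹ * t ε)^2
            = ((M:ℝ)⁻¹)^2 * ∑ ε : Fin n → Bool, (t ε)^2 := by
              rw [Finset.mul_sum]
              exact Finset.sum_congr rfl fun ε _ => by ring
          _ ≤ ((M:ℝ)⁻¹)^2 * ((a*lam)^2 * (M:ℝ)) :=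
              mul_le_mul_of_nonneg_left hTbound (by positivity)
          _ = (a * lam * (Real.sqrt (M:ℝ))⁻¹)^2 := by
              have hss : Real.sqrt (M:ℝ) * Real.sqrt (M:ℝ) = (M:ℝ) := Real.mul_self_sqrt hM0.le
              have hMne : (M:ℝ) ≠ 0 := ne_of_gt hM0
              have hsne : Real.sqrt (M:ℝ) ≠ 0 := ne_of_gt hsqM0
              field_simp
              nlinarith [hss]
      -- combine via hu
      have hwk0 : 0 ≤ weakNorm (conjExp 2) M φseq := Stmt6Aux.weakNorm_nonneg _ _ _
      have hRHS : C * lpNormFin 2 M zseq * weakNorm (conjExp 2) M φseq ≤ C * (a * lam) := by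
        calc C * lpNormFin 2 M zseq * weakNorm (conjExp 2) M φseq
            ≤ C * Real.sqrt M * (a * lam * (Real.sqrt M)⁻¹) := by
              refine mul_le_mul ?_ hwk ?_ ?_
              · exact mul_le_mul_of_nonneg_left hlp hC0
              · exact hwk0
              · positivity
          _ = C * (a * lam) := by
              have hsne : Real.sqrt (M:ℝ) ≠ 0 := ne_of_gt hsqM0
              field_simp
      linarith [hL, main, hRHS]
    -- final combination
    have hMS : (M:ℝ) * (∑ i ∈ Finset.range m, ‖u (x i)‖)
        ≤ Real.sqrt 3 * b * B * ∑ ε : Fin n → Bool, ‖(Ψ ε).comp u‖ := by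
      have h1 : (M:ℝ) * (∑ i ∈ Finset.range m, ‖u (x i)‖)
          ≤ ∑ i ∈ Finset.range m, (Real.sqrt 3 * b *
            ∑ ε : Fin n → Bool, |Ψ ε (u (x i))|) := by
        rw [Finset.mul_sum]
        refine Finset.sum_le_sum fun i hi => ?_
        have := hkh i hi
        calc (M:ℝ) * ‖u (x i)‖ = (2^n : ℝ) * ‖u (x i)‖ := by
              rw [hM]; push_cast; ring
          _ ≤ _ := this
      have h2 : ∑ i ∈ Finset.range m, (Real.sqrt 3 * b *
            ∑ ε : Fin n → Bool, |Ψ ε (u (x i))|)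
          = Real.sqrt 3 * b * ∑ ε : Fin n → Bool,
            (∑ i ∈ Finset.range m, |((Ψ ε).comp u) (x i)|) := by
        rw [← Finset.mul_sum]
        congr 1
        exact Finset.sum_comm
      have h3 : ∑ ε : Fin n → Bool, (∑ i ∈ Finset.range m, |((Ψ ε).comp u) (x i)|)
          ≤ ∑ ε : Fin n → Bool, ‖(Ψ ε).comp u‖ * B := by
        refine Finset.sum_le_sum fun ε _ => ?_
        calc ∑ i ∈ Finset.range m, |((Ψ ε).comp u) (x i)|
            ≤ ‖(Ψ ε).comp u‖ * weakNorm 1 m x :=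
              Stmt6Aux.sum_abs_le_opNorm_mul_weakNorm_one _
          _ ≤ ‖(Ψ ε).comp u‖ * B := mul_le_mul_of_nonneg_left (hB m) (norm_nonneg _)
      calc (M:ℝ) * (∑ i ∈ Finset.range m, ‖u (x i)‖)
          ≤ ∑ i ∈ Finset.range m, (Real.sqrt 3 * b *
            ∑ ε : Fin n → Bool, |Ψ ε (u (x i))|) := h1
        _ = Real.sqrt 3 * b * ∑ ε : Fin n → Bool,
            (∑ i ∈ Finset.range m, |((Ψ ε).comp u) (x i)|) := h2
        _ ≤ Real.sqrt 3 * b * ∑ ε : Fin n → Bool, (‖(Ψ ε).comp u‖ * B) := by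
            refine mul_le_mul_of_nonneg_left ?_ (by positivity)
            calc ∑ ε : Fin n → Bool, (∑ i ∈ Finset.range m, |((Ψ ε).comp u) (x i)|)
                ≤ ∑ ε : Fin n → Bool, ‖(Ψ ε).comp u‖ * B := h3
              _ = ∑ ε : Fin n → Bool, (‖(Ψ ε).comp u‖ * B) := rfl
        _ = Real.sqrt 3 * b * B * ∑ ε : Fin n → Bool, ‖(Ψ ε).comp u‖ := by
            rw [← Finset.sum_mul]
            ring
    have hsumnn : (0:ℝ) ≤ ∑ ε : Fin n → Bool, ‖(Ψ ε).comp u‖ :=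
      Finset.sum_nonneg fun ε _ => norm_nonneg _
    have hclaim' : ∑ ε : Fin n → Bool, ‖(Ψ ε).comp u‖ ≤ (M:ℝ) * (C * (a * lam)) := by
      have := mul_le_mul_of_nonneg_left claim hM0.le
      calc ∑ ε : Fin n → Bool, ‖(Ψ ε).comp u‖
          = (M:ℝ) * ((M:ℝ)⁻¹ * ∑ ε : Fin n → Bool, ‖(Ψ ε).comp u‖) := by
            field_simp
        _ ≤ (M:ℝ) * (C * (a * lam)) := this
    have hfinal : (M:ℝ) * (∑ i ∈ Finset.range m, ‖u (x i)‖)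
        ≤ (M:ℝ) * (Real.sqrt 3 * (lam * (lam * (C * B)))) := by
      calc (M:ℝ) * (∑ i ∈ Finset.range m, ‖u (x i)‖)
          ≤ Real.sqrt 3 * b * B * ∑ ε : Fin n → Bool, ‖(Ψ ε).comp u‖ := hMS
        _ ≤ Real.sqrt 3 * b * B * ((M:ℝ) * (C * (a * lam))) := by
            refine mul_le_mul_of_nonneg_left hclaim' (by positivity)
        _ = (M:ℝ) * (Real.sqrt 3 * ((a * b) * (lam * (C * B)))) := by ring
        _ ≤ (M:ℝ) * (Real.sqrt 3 * (lam * (lam * (C * B)))) := by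
            refine mul_le_mul_of_nonneg_left ?_ hM0.le
            refine mul_le_mul_of_nonneg_left ?_ (Real.sqrt_nonneg _)
            refine mul_le_mul_of_nonneg_right hab ?_
            positivity
    exact le_of_mul_le_mul_left hfinal hM0
  have hsum : Summable fun i => ‖u (x i)‖ :=
    summable_of_sum_range_le (fun i => norm_nonneg _) key
  have : (fun i => ‖u (x i)‖ ^ (1:ℝ≥0∞).toReal) = fun i => ‖u (x i)‖ := by
    funext i
    rw [ENNReal.toReal_one, Real.rpow_one]
  rw [this]
  exact hsum

end
end

section
/- Let 1 ≤ q* ≤ 2 ≤ p < ∞ and let n, m be positive integers. For any Banach space Y, vectors w_1,...,w_n ∈ Y, scalar matrix (ν_{i,k}) ∈ ℝ^{m×n}, and functionals y_1*,...,y_m* ∈ Y*, one has Σ_{i=1}^m |y_i*(Σ_{k=1}^n ν_{i,k} w_k)| ≤ (1/A_{q*}) · K_{2,q*} · (Σ_{i=1}^m (Σ_{k=1}^n |ν_{i,k}|^{p*})^{q/p*})^{1/q} · ‖(y_i*)_{i=1}^m‖_{w,q*} · (∫_0^1 ‖Σ_{k=1}^n r_k(t) w_k‖² dt)^{1/2},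 where 1/p + 1/p* = 1 and 1/q + 1/q* = 1. -/
open MeasureTheory Finset Filter
open scoped ENNReal NNReal

noncomputable section

universe u v

section AuxLemmas

open Real

lemma rademacher_measurable (i : ℕ) : Measurable (rademacher i) := by
  unfold rademacher
  exact Measurable.ite
    (measurableSet_lt ((measurable_id.const_mul ((2:ℝ)^i)).fract) measurable_const)
    measurable_const measurable_const

lemma abs_rademacher (i : ℕ) (t : ℝ) : |rademacher i t| = 1 := by
  unfold rademacher; split_ifs <;> norm_num

lemma aux_intervalIntegrable {f : ℝ → ℝ} (hf : Measurable f) (C : ℝ)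
    (hC : ∀ t, |f t| ≤ C) : IntervalIntegrable f MeasureTheory.volume 0 1 := by
  rw [intervalIntegrable_iff]
  refine MeasureTheory.Integrable.mono' (g := fun _ => C) ?_
    hf.aestronglyMeasurable (MeasureTheory.ae_of_all _ fun t => by
      simpa [Real.norm_eq_abs] using hC t)
  refine MeasureTheory.integrableOn_const ?_
  rw [Set.uIoc_of_le (by norm_num : (0:ℝ) ≤ 1)]
  exact measure_Ioc_lt_top.ne

lemma aux_rpow_sum_antitone {ι : Type*} (s : Finset ι) (f : ι → ℝ) (hf : ∀ i, 0 ≤ f i)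
    {r q : ℝ} (hr : 0 < r) (hrq : r ≤ q) :
    (∑ i ∈ s, f i ^ q) ^ (1/q) ≤ (∑ i ∈ s, f i ^ r) ^ (1/r) := by
  have hq : 0 < q := lt_of_lt_of_le hr hrq
  have hsum_r : 0 ≤ ∑ i ∈ s, f i ^ r := Finset.sum_nonneg fun i _ => rpow_nonneg (hf i) _
  rcases eq_or_lt_of_le hsum_r with h0 | hsum_pos
  · have hzero : ∀ i ∈ s, f i = 0 := by
      intro i hi
      have h1 := (Finset.sum_eq_zero_iff_of_nonneg
        (fun i _ => rpow_nonneg (hf i) r)).1 h0.symm i hi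
      exact (Real.rpow_eq_zero (hf i) hr.ne').1 h1
    have : (∑ i ∈ s, f i ^ q) = 0 :=
      Finset.sum_eq_zero fun i hi => by rw [hzero i hi, Real.zero_rpow hq.ne']
    rw [this, Real.zero_rpow (by positivity : (1:ℝ)/q ≠ 0)]
    exact rpow_nonneg hsum_r _
  · set T := (∑ i ∈ s, f i ^ r) ^ (1/r) with hT
    have hTpos : 0 < T := rpow_pos_of_pos hsum_pos _
    have hTr : T ^ r = ∑ i ∈ s, f i ^ r := by
      rw [hT, one_div, Real.rpow_inv_rpow hsum_r hr.ne']
    have key : ∀ i ∈ s, f i ≤ T := by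
      intro i hi
      have h1 : f i ^ r ≤ ∑ j ∈ s, f j ^ r :=
        Finset.single_le_sum (fun j _ => rpow_nonneg (hf j) r) hi
      calc f i = (f i ^ r) ^ (1/r) := by
            rw [one_div, Real.rpow_rpow_inv (hf i) hr.ne']
        _ ≤ T := Real.rpow_le_rpow (rpow_nonneg (hf i) r) h1 (by positivity)
    have hdiv : ∑ i ∈ s, (f i / T) ^ q ≤ 1 := by
      calc ∑ i ∈ s, (f i / T) ^ q ≤ ∑ i ∈ s, (f i / T) ^ r := by
            apply Finset.sum_le_sum; intro i hi
            rcases eq_or_lt_of_le (hf i) with h0i | hpos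
            · rw [← h0i, zero_div, Real.zero_rpow hq.ne', Real.zero_rpow hr.ne']
            · exact Real.rpow_le_rpow_of_exponent_ge (by positivity)
                ((div_le_one hTpos).2 (key i hi)) hrq
        _ = (∑ i ∈ s, f i ^ r) / T ^ r := by
            rw [Finset.sum_div]
            exact Finset.sum_congr rfl fun i _ => Real.div_rpow (hf i) hTpos.le r
        _ = 1 := by rw [hTr, div_self hsum_pos.ne']
    have hsumq : ∑ i ∈ s, f i ^ q ≤ T ^ q := by
      have h2 : (∑ i ∈ s, f i ^ q) / T ^ q ≤ 1 := by
        rw [Finset.sum_div]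
        calc ∑ i ∈ s, f i ^ q / T ^ q
            = ∑ i ∈ s, (f i / T) ^ q :=
              Finset.sum_congr rfl fun i _ => (Real.div_rpow (hf i) hTpos.le q).symm
          _ ≤ 1 := hdiv
      exact (div_le_one (rpow_pos_of_pos hTpos q)).1 h2
    calc (∑ i ∈ s, f i ^ q) ^ (1/q) ≤ (T ^ q) ^ (1/q) :=
          Real.rpow_le_rpow (Finset.sum_nonneg fun i _ => rpow_nonneg (hf i) _)
            hsumq (by positivity)
      _ = T := by rw [one_div, Real.rpow_rpow_inv hTpos.le hq.ne']

lemma lpNormFin_nonneg {Z : Type u} [NormedAddCommGroup Z] (q : ℝ≥0∞) (m : ℕ) (x : ℕ → Z) :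
    0 ≤ lpNormFin q m x := by
  unfold lpNormFin; split_ifs
  · exact Real.iSup_nonneg fun i => norm_nonneg _
  · exact Real.rpow_nonneg
      (Finset.sum_nonneg fun i _ => Real.rpow_nonneg (norm_nonneg _) _) _

lemma weakNorm_nonneg {Z : Type u} [NormedAddCommGroup Z] [NormedSpace ℝ Z]
    (q : ℝ≥0∞) (m : ℕ) (x : ℕ → Z) : 0 ≤ weakNorm q m x := by
  unfold weakNorm; split_ifs
  · exact Real.iSup_nonneg fun i => norm_nonneg _
  · exact Real.iSup_nonneg fun ψ => Real.rpow_nonneg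
      (Finset.sum_nonneg fun i _ => Real.rpow_nonneg (abs_nonneg _) _) _

lemma aux_weak_pointwise {Y : Type v} [NormedAddCommGroup Y] [NormedSpace ℝ Y]
    {qstar : ℝ} (hq1 : 1 ≤ qstar) (m : ℕ) (φ : ℕ → (Y →L[ℝ] ℝ)) (y : Y) :
    ∑ i ∈ Finset.range m, |φ i y| ^ qstar ≤
      (weakNorm (ENNReal.ofReal qstar) m φ) ^ qstar * ‖y‖ ^ qstar := by
  have hq0 : (0:ℝ) < qstar := by linarith
  have hqne : qstar ≠ 0 := ne_of_gt hq0
  have hne : ENNReal.ofReal qstar ≠ ⊤ := ENNReal.ofReal_ne_top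
  have hW0 : 0 ≤ weakNorm (ENNReal.ofReal qstar) m φ := weakNorm_nonneg _ _ _
  have hWdef : weakNorm (ENNReal.ofReal qstar) m φ =
      ⨆ ψ : {ψ : (Y →L[ℝ] ℝ) →L[ℝ] ℝ // ‖ψ‖ ≤ 1},
        (∑ i ∈ Finset.range m, |ψ.1 (φ i)| ^ qstar) ^ (1/qstar) := by
    simp only [weakNorm, if_neg hne, ENNReal.toReal_ofReal hq0.le]
  rcases eq_or_ne y 0 with rfl | hy
  · have : ∀ i ∈ Finset.range m, |φ i (0:Y)| ^ qstar = 0 := fun i _ => by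
      rw [map_zero, abs_zero, Real.zero_rpow hqne]
    rw [Finset.sum_eq_zero this]
    positivity
  · have hy0 : 0 < ‖y‖ := norm_pos_iff.2 hy
    set Ψ : (Y →L[ℝ] ℝ) →L[ℝ] ℝ := ‖y‖⁻¹ • NormedSpace.inclusionInDoubleDual ℝ Y y with hΨ
    have hΨnorm : ‖Ψ‖ ≤ 1 := by
      rw [hΨ]
      have h1 : ‖NormedSpace.inclusionInDoubleDual ℝ Y y‖ ≤ ‖y‖ :=
        NormedSpace.double_dual_bound ℝ Y y
      calc ‖(‖y‖⁻¹) • NormedSpace.inclusionInDoubleDual ℝ Y y‖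
          ≤ ‖(‖y‖⁻¹ : ℝ)‖ * ‖NormedSpace.inclusionInDoubleDual ℝ Y y‖ := ContinuousLinearMap.opNorm_smul_le _ _
        _ = ‖y‖⁻¹ * ‖NormedSpace.inclusionInDoubleDual ℝ Y y‖ := by rw [norm_inv, norm_norm]
        _ ≤ ‖y‖⁻¹ * ‖y‖ := mul_le_mul_of_nonneg_left h1 (by positivity)
        _ = 1 := inv_mul_cancel₀ hy0.ne'
    have hbdd : BddAbove (Set.range fun ψ : {ψ : (Y →L[ℝ] ℝ) →L[ℝ] ℝ // ‖ψ‖ ≤ 1} =>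
        (∑ i ∈ Finset.range m, |ψ.1 (φ i)| ^ qstar) ^ (1/qstar)) := by
      refine ⟨(∑ i ∈ Finset.range m, ‖φ i‖ ^ qstar) ^ (1/qstar), ?_⟩
      rintro x ⟨ψ, rfl⟩
      refine Real.rpow_le_rpow
        (Finset.sum_nonneg fun i _ => Real.rpow_nonneg (abs_nonneg _) _)
        (Finset.sum_le_sum fun i _ => ?_) (by positivity)
      refine Real.rpow_le_rpow (abs_nonneg _) ?_ hq0.le
      calc |ψ.1 (φ i)| ≤ ‖ψ.1‖ * ‖φ i‖ := by
            rw [← Real.norm_eq_abs]; exact ψ.1.le_opNorm (φ i)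
        _ ≤ 1 * ‖φ i‖ := mul_le_mul_of_nonneg_right ψ.2 (norm_nonneg _)
        _ = ‖φ i‖ := one_mul _
    have hle : (∑ i ∈ Finset.range m, |Ψ (φ i)| ^ qstar) ^ (1/qstar) ≤
        weakNorm (ENNReal.ofReal qstar) m φ := by
      rw [hWdef]
      exact le_ciSup hbdd (⟨Ψ, hΨnorm⟩ : {ψ : (Y →L[ℝ] ℝ) →L[ℝ] ℝ // ‖ψ‖ ≤ 1})
    have hΨval : ∀ i, Ψ (φ i) = ‖y‖⁻¹ * φ i y := fun i => by
      rw [hΨ]; rfl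
    have hsum_eq : (∑ i ∈ Finset.range m, |Ψ (φ i)| ^ qstar) =
        (‖y‖⁻¹) ^ qstar * ∑ i ∈ Finset.range m, |φ i y| ^ qstar := by
      rw [Finset.mul_sum]
      refine Finset.sum_congr rfl fun i _ => ?_
      rw [hΨval i, abs_mul, abs_of_nonneg (by positivity : (0:ℝ) ≤ ‖y‖⁻¹),
        Real.mul_rpow (by positivity) (abs_nonneg _)]
    have hsum_nonneg : 0 ≤ ∑ i ∈ Finset.range m, |Ψ (φ i)| ^ qstar :=
      Finset.sum_nonneg fun i _ => Real.rpow_nonneg (abs_nonneg _) _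
    have hkey : (∑ i ∈ Finset.range m, |Ψ (φ i)| ^ qstar) ≤
        (weakNorm (ENNReal.ofReal qstar) m φ) ^ qstar := by
      have := Real.rpow_le_rpow (Real.rpow_nonneg hsum_nonneg _) hle hq0.le
      rwa [one_div, Real.rpow_inv_rpow hsum_nonneg hqne] at this
    rw [hsum_eq] at hkey
    rw [Real.inv_rpow hy0.le, inv_mul_le_iff₀ (Real.rpow_pos_of_pos hy0 _)] at hkey
    calc ∑ i ∈ Finset.range m, |φ i y| ^ qstar
        ≤ ‖y‖ ^ qstar * (weakNorm (ENNReal.ofReal qstar) m φ) ^ qstar := hkey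
      _ = (weakNorm (ENNReal.ofReal qstar) m φ) ^ qstar * ‖y‖ ^ qstar := mul_comm _ _

end AuxLemmas

set_option maxHeartbeats 1000000 in
/-- The key finite-dimensional estimate: for `1 ≤ q* ≤ 2 ≤ p < ∞`,
`∑_i |y_i*(∑_k ν_{i,k} w_k)| ≤ (1/A_{q*}) K_{2,q*}
(∑_i (∑_k |ν_{i,k}|^{p*})^{q/p*})^{1/q} ‖(y_i*)‖_{w,q*} (∫_0^1 ‖∑_k r_k(t)w_k‖²dt)^{1/2}`,
where `A_{q*}` is a lower Khinchin constant and `K_{2,q*}` a Kahane constant. -/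
theorem stmt16 {Y : Type v} [NormedAddCommGroup Y] [NormedSpace ℝ Y] [CompleteSpace Y]
    (p ps qstar : ℝ) (hp : 2 ≤ p) (hps : 1 / p + 1 / ps = 1)
    (hq1 : 1 ≤ qstar) (hq2 : qstar ≤ 2)
    (A K : ℝ) (hA : 0 < A)
    (hKhinchin : ∀ m (a : ℕ → ℝ),
      A * (∑ i ∈ Finset.range m, (a i) ^ 2) ^ ((1:ℝ)/2) ≤
        (∫ t in (0:ℝ)..1, |∑ i ∈ Finset.range m, rademacher i t * a i| ^ qstar) ^
          (1 / qstar))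
    (hKahane : ∀ m (w : ℕ → Y),
      (∫ t in (0:ℝ)..1, ‖∑ i ∈ Finset.range m, rademacher i t • w i‖ ^ qstar) ^
          (1 / qstar) ≤ K * radNorm m w)
    (n m : ℕ) (hn : 0 < n) (hm : 0 < m)
    (w : ℕ → Y) (ν : ℕ → ℕ → ℝ) (φ : ℕ → (Y →L[ℝ] ℝ)) :
    ∑ i ∈ Finset.range m, |φ i (∑ k ∈ Finset.range n, ν i k • w k)| ≤
      (1 / A) * K *
        lpNormFin (conjExp (ENNReal.ofReal qstar)) m
          (fun i => (∑ k ∈ Finset.range n, |ν i k| ^ ps) ^ (1 / ps)) *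
        weakNorm (ENNReal.ofReal qstar) m φ * radNorm n w := by
  have hq0 : (0:ℝ) < qstar := by linarith
  have hqne : qstar ≠ 0 := ne_of_gt hq0
  have hp0 : (0:ℝ) < p := by linarith
  have hps_inv_pos : 0 < 1/ps := by
    have h2 : 1/p ≤ 1/2 := one_div_le_one_div_of_le (by norm_num) hp
    linarith
  have hps0 : 0 < ps := by
    rcases lt_trichotomy ps 0 with h | h | h
    · exfalso; have : 1/ps < 0 := by exact div_neg_of_pos_of_neg one_pos h
      linarith
    · exfalso; rw [h] at hps_inv_pos; simp at hps_inv_pos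
    · exact h
  have hps1 : 1 < ps := by
    have h3 : 1/ps < 1 := by
      have : 0 < 1/p := by positivity
      linarith
    exact (div_lt_one hps0).1 h3
  have hconjp : Real.HolderConjugate ps p := by
    rw [Real.holderConjugate_iff]
    constructor
    · exact hps1
    · rw [← one_div, ← one_div]; linarith
  -- abbreviations
  set S : ℝ → Y := fun t => ∑ k ∈ Finset.range n, rademacher k t • w k with hSdef
  set α : ℕ → ℝ := fun i => (∑ k ∈ Finset.range n, |ν i k| ^ ps) ^ (1 / ps) with hαdef
  set β : ℕ → ℝ := fun i => (∫ t in (0:ℝ)..1, |φ i (S t)| ^ qstar) ^ (1 / qstar) with hβdef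
  have hα0 : ∀ i, 0 ≤ α i := fun i => Real.rpow_nonneg
    (Finset.sum_nonneg fun k _ => Real.rpow_nonneg (abs_nonneg _) _) _
  have hβ0 : ∀ i, 0 ≤ β i := fun i => Real.rpow_nonneg
    (intervalIntegral.integral_nonneg (by norm_num)
      fun t _ => Real.rpow_nonneg (abs_nonneg _) _) _
  have hW0 : 0 ≤ weakNorm (ENNReal.ofReal qstar) m φ := weakNorm_nonneg _ _ _
  have hL0 : 0 ≤ lpNormFin (conjExp (ENNReal.ofReal qstar)) m α := lpNormFin_nonneg _ _ _
  -- measurability and integrability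
  have hSmeas : MeasureTheory.StronglyMeasurable S := by
    rw [hSdef]
    exact Finset.stronglyMeasurable_fun_sum _ fun k _ =>
      ((rademacher_measurable k).stronglyMeasurable).smul_const (w k)
  set B : ℝ := ∑ k ∈ Finset.range n, ‖w k‖ with hBdef
  have hB0 : 0 ≤ B := Finset.sum_nonneg fun k _ => norm_nonneg _
  have hSbound : ∀ t, ‖S t‖ ≤ B := by
    intro t
    rw [hSdef, hBdef]
    refine le_trans (norm_sum_le _ _) (le_of_eq (Finset.sum_congr rfl fun k _ => ?_))
    rw [norm_smul, Real.norm_eq_abs, abs_rademacher, one_mul]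
  have hint1 : ∀ i, IntervalIntegrable (fun t => |φ i (S t)| ^ qstar)
      MeasureTheory.volume 0 1 := by
    intro i
    refine aux_intervalIntegrable ?_ ((‖φ i‖ * B) ^ qstar) ?_
    · exact ((((φ i).continuous.comp_stronglyMeasurable hSmeas).measurable).abs).pow
        measurable_const
    · intro t
      rw [abs_of_nonneg (Real.rpow_nonneg (abs_nonneg _) _)]
      refine Real.rpow_le_rpow (abs_nonneg _) ?_ hq0.le
      calc |φ i (S t)| ≤ ‖φ i‖ * ‖S t‖ := by
            rw [← Real.norm_eq_abs]; exact (φ i).le_opNorm (S t)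
        _ ≤ ‖φ i‖ * B := mul_le_mul_of_nonneg_left (hSbound t) (norm_nonneg _)
  have hint2 : IntervalIntegrable (fun t => ‖S t‖ ^ qstar) MeasureTheory.volume 0 1 := by
    refine aux_intervalIntegrable ?_ (B ^ qstar) ?_
    · exact (hSmeas.norm.measurable).pow measurable_const
    · intro t
      rw [abs_of_nonneg (Real.rpow_nonneg (norm_nonneg _) _)]
      exact Real.rpow_le_rpow (norm_nonneg _) (hSbound t) hq0.le
  -- Step 1: pointwise Hölder + monotonicity + Khinchin
  have step1 : ∀ i ∈ Finset.range m,
      |φ i (∑ k ∈ Finset.range n, ν i k • w k)| ≤ α i * ((1/A) * β i) := by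
    intro i _
    have e1 : φ i (∑ k ∈ Finset.range n, ν i k • w k)
        = ∑ k ∈ Finset.range n, ν i k * φ i (w k) := by
      rw [map_sum]
      exact Finset.sum_congr rfl fun k _ => by rw [_root_.map_smul, smul_eq_mul]
    have hHolder : |∑ k ∈ Finset.range n, ν i k * φ i (w k)| ≤
        α i * (∑ k ∈ Finset.range n, |φ i (w k)| ^ p) ^ (1/p) := by
      calc |∑ k ∈ Finset.range n, ν i k * φ i (w k)|
          ≤ ∑ k ∈ Finset.range n, |ν i k * φ i (w k)| :=
            Finset.abs_sum_le_sum_abs _ _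
        _ = ∑ k ∈ Finset.range n, |ν i k| * |φ i (w k)| :=
            Finset.sum_congr rfl fun k _ => abs_mul _ _
        _ ≤ (∑ k ∈ Finset.range n, |(|ν i k|)| ^ ps) ^ (1/ps) *
              (∑ k ∈ Finset.range n, |(|φ i (w k)|)| ^ p) ^ (1/p) :=
            Real.inner_le_Lp_mul_Lq _ _ _ hconjp
        _ = α i * (∑ k ∈ Finset.range n, |φ i (w k)| ^ p) ^ (1/p) := by
            rw [hαdef]; simp only [abs_abs]
    have hmono : (∑ k ∈ Finset.range n, |φ i (w k)| ^ p) ^ (1/p) ≤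
        (∑ k ∈ Finset.range n, |φ i (w k)| ^ (2:ℝ)) ^ (1/(2:ℝ)) :=
      aux_rpow_sum_antitone _ _ (fun k => abs_nonneg _) two_pos hp
    have hsq : (∑ k ∈ Finset.range n, |φ i (w k)| ^ (2:ℝ)) ^ (1/(2:ℝ)) =
        (∑ k ∈ Finset.range n, (φ i (w k)) ^ 2) ^ ((1:ℝ)/2) := by
      congr 1
      exact Finset.sum_congr rfl fun k _ => by
        rw [show (2:ℝ) = ((2:ℕ):ℝ) by norm_num, Real.rpow_natCast, sq_abs]
    have hKh := hKhinchin n (fun k => φ i (w k))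
    have e2 : ∀ t, (∑ k ∈ Finset.range n, rademacher k t * φ i (w k)) = φ i (S t) := by
      intro t
      rw [hSdef, map_sum]
      exact Finset.sum_congr rfl fun k _ => by rw [_root_.map_smul, smul_eq_mul]
    rw [show (∫ t in (0:ℝ)..1,
        |∑ k ∈ Finset.range n, rademacher k t * φ i (w k)| ^ qstar)
        = ∫ t in (0:ℝ)..1, |φ i (S t)| ^ qstar from
      intervalIntegral.integral_congr fun t _ => by rw [e2 t]] at hKh
    have hfinal : (∑ k ∈ Finset.range n, (φ i (w k)) ^ 2) ^ ((1:ℝ)/2) ≤ (1/A) * β i := by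
      have h' : (∑ k ∈ Finset.range n, (φ i (w k)) ^ 2) ^ ((1:ℝ)/2) ≤ β i / A :=
        (le_div_iff₀ hA).2 (by rw [mul_comm]; exact hKh)
      calc (∑ k ∈ Finset.range n, (φ i (w k)) ^ 2) ^ ((1:ℝ)/2) ≤ β i / A := h'
        _ = (1/A) * β i := by ring
    calc |φ i (∑ k ∈ Finset.range n, ν i k • w k)|
        = |∑ k ∈ Finset.range n, ν i k * φ i (w k)| := by rw [e1]
      _ ≤ α i * (∑ k ∈ Finset.range n, |φ i (w k)| ^ p) ^ (1/p) := hHolder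
      _ ≤ α i * ((1/A) * β i) := by
          refine mul_le_mul_of_nonneg_left (le_trans hmono ?_) (hα0 i)
          rw [hsq]; exact hfinal
  -- Step 2
  have step2 : ∑ i ∈ Finset.range m, |φ i (∑ k ∈ Finset.range n, ν i k • w k)| ≤
      (1/A) * ∑ i ∈ Finset.range m, α i * β i := by
    calc ∑ i ∈ Finset.range m, |φ i (∑ k ∈ Finset.range n, ν i k • w k)|
        ≤ ∑ i ∈ Finset.range m, α i * ((1/A) * β i) := Finset.sum_le_sum step1
      _ = (1/A) * ∑ i ∈ Finset.range m, α i * β i := by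
          rw [Finset.mul_sum]
          exact Finset.sum_congr rfl fun i _ => by ring
  -- Step 4 : Hölder in i
  have step4 : ∑ i ∈ Finset.range m, α i * β i ≤
      lpNormFin (conjExp (ENNReal.ofReal qstar)) m α *
        (∑ i ∈ Finset.range m, β i ^ qstar) ^ (1/qstar) := by
    rcases eq_or_lt_of_le hq1 with hq_eq | hq_lt
    · -- qstar = 1
      have hconjtop : conjExp (ENNReal.ofReal qstar) = ⊤ := by
        rw [← hq_eq]; simp [conjExp]
      have hL_eq : lpNormFin (conjExp (ENNReal.ofReal qstar)) m α
          = ⨆ j : Fin m, ‖α (j:ℕ)‖ := by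
        simp only [lpNormFin, if_pos hconjtop]
      have hsup : ∀ i ∈ Finset.range m, α i ≤
          lpNormFin (conjExp (ENNReal.ofReal qstar)) m α := by
        intro i hi
        rw [hL_eq]
        refine le_trans (le_abs_self _) ?_
        rw [← Real.norm_eq_abs]
        exact le_ciSup (f := fun j : Fin m => ‖α (j:ℕ)‖)
          (Set.Finite.bddAbove (Set.finite_range _))
          (⟨i, Finset.mem_range.1 hi⟩ : Fin m)
      calc ∑ i ∈ Finset.range m, α i * β i
          ≤ ∑ i ∈ Finset.range m,
              lpNormFin (conjExp (ENNReal.ofReal qstar)) m α * β i :=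
            Finset.sum_le_sum fun i hi =>
              mul_le_mul_of_nonneg_right (hsup i hi) (hβ0 i)
        _ = lpNormFin (conjExp (ENNReal.ofReal qstar)) m α *
              ∑ i ∈ Finset.range m, β i := by rw [Finset.mul_sum]
        _ = lpNormFin (conjExp (ENNReal.ofReal qstar)) m α *
              (∑ i ∈ Finset.range m, β i ^ qstar) ^ (1/qstar) := by
            rw [← hq_eq]
            simp [Real.rpow_one]
    · -- 1 < qstar
      set q : ℝ := (1 - qstar⁻¹)⁻¹ with hqdef
      have hq_inv_lt : qstar⁻¹ < 1 := inv_lt_one_of_one_lt₀ hq_lt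
      have hq_inv_pos : 0 < qstar⁻¹ := inv_pos.2 hq0
      have hd_pos : 0 < 1 - qstar⁻¹ := by linarith
      have hqpos : 0 < q := by rw [hqdef]; positivity
      have hconj : Real.HolderConjugate q qstar := by
        rw [Real.holderConjugate_iff]
        constructor
        · rw [hqdef]; exact (one_lt_inv₀ hd_pos).2 (by linarith)
        · rw [hqdef, inv_inv]; ring
      have hconjExp_eq : conjExp (ENNReal.ofReal qstar) = ENNReal.ofReal q := by
        rw [conjExp, ← ENNReal.ofReal_inv_of_pos hq0, ← ENNReal.ofReal_one,
          ← ENNReal.ofReal_sub 1 hq_inv_pos.le, ← ENNReal.ofReal_inv_of_pos hd_pos]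
      have hL_eq : lpNormFin (conjExp (ENNReal.ofReal qstar)) m α
          = (∑ i ∈ Finset.range m, α i ^ q) ^ (1/q) := by
        simp only [lpNormFin, hconjExp_eq, if_neg (ENNReal.ofReal_ne_top),
          ENNReal.toReal_ofReal hqpos.le]
        congr 1
        exact Finset.sum_congr rfl fun i _ => by
          rw [Real.norm_eq_abs, abs_of_nonneg (hα0 i)]
      have e3 : (∑ i ∈ Finset.range m, |α i| ^ q) = ∑ i ∈ Finset.range m, α i ^ q :=
        Finset.sum_congr rfl fun i _ => by rw [abs_of_nonneg (hα0 i)]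
      have e4 : (∑ i ∈ Finset.range m, |β i| ^ qstar)
          = ∑ i ∈ Finset.range m, β i ^ qstar :=
        Finset.sum_congr rfl fun i _ => by rw [abs_of_nonneg (hβ0 i)]
      calc ∑ i ∈ Finset.range m, α i * β i
          ≤ (∑ i ∈ Finset.range m, |α i| ^ q) ^ (1/q) *
              (∑ i ∈ Finset.range m, |β i| ^ qstar) ^ (1/qstar) :=
            Real.inner_le_Lp_mul_Lq _ α β hconj
        _ = lpNormFin (conjExp (ENNReal.ofReal qstar)) m α *
              (∑ i ∈ Finset.range m, β i ^ qstar) ^ (1/qstar) := by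
            rw [e3, e4, ← hL_eq]
  -- Step 5
  have step5 : (∑ i ∈ Finset.range m, β i ^ qstar) ^ (1/qstar) ≤
      weakNorm (ENNReal.ofReal qstar) m φ * (K * radNorm n w) := by
    have e5 : ∀ i ∈ Finset.range m,
        β i ^ qstar = ∫ t in (0:ℝ)..1, |φ i (S t)| ^ qstar := by
      intro i _
      rw [hβdef]
      rw [one_div, Real.rpow_inv_rpow (intervalIntegral.integral_nonneg (by norm_num)
        fun t _ => Real.rpow_nonneg (abs_nonneg _) _) hqne]
    have e6 : ∑ i ∈ Finset.range m, β i ^ qstar =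
        ∫ t in (0:ℝ)..1, ∑ i ∈ Finset.range m, |φ i (S t)| ^ qstar := by
      rw [Finset.sum_congr rfl e5,
        ← intervalIntegral.integral_finset_sum (fun i _ => hint1 i)]
    have hmono2 : (∫ t in (0:ℝ)..1, ∑ i ∈ Finset.range m, |φ i (S t)| ^ qstar) ≤
        ∫ t in (0:ℝ)..1,
          (weakNorm (ENNReal.ofReal qstar) m φ) ^ qstar * ‖S t‖ ^ qstar := by
      have hintsum : IntervalIntegrable
          (fun t => ∑ i ∈ Finset.range m, |φ i (S t)| ^ qstar)
          MeasureTheory.volume 0 1 := by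
        have h := IntervalIntegrable.sum (f := fun i t => |φ i (S t)| ^ qstar)
          (Finset.range m) (fun i _ => hint1 i)
        have heq : (∑ i ∈ Finset.range m, fun t => |φ i (S t)| ^ qstar)
            = fun t => ∑ i ∈ Finset.range m, |φ i (S t)| ^ qstar := by
          ext t; simp [Finset.sum_apply]
        rwa [heq] at h
      refine intervalIntegral.integral_mono_on (by norm_num)
        hintsum (hint2.const_mul _) ?_
      intro t _
      exact aux_weak_pointwise hq1 m φ (S t)
    have e7 : (∫ t in (0:ℝ)..1,
        (weakNorm (ENNReal.ofReal qstar) m φ) ^ qstar * ‖S t‖ ^ qstar) =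
        (weakNorm (ENNReal.ofReal qstar) m φ) ^ qstar *
          ∫ t in (0:ℝ)..1, ‖S t‖ ^ qstar :=
      intervalIntegral.integral_const_mul _ _
    have hI0 : 0 ≤ ∫ t in (0:ℝ)..1, ‖S t‖ ^ qstar :=
      intervalIntegral.integral_nonneg (by norm_num)
        fun t _ => Real.rpow_nonneg (norm_nonneg _) _
    calc (∑ i ∈ Finset.range m, β i ^ qstar) ^ (1/qstar)
        ≤ ((weakNorm (ENNReal.ofReal qstar) m φ) ^ qstar *
            ∫ t in (0:ℝ)..1, ‖S t‖ ^ qstar) ^ (1/qstar) := by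
          refine Real.rpow_le_rpow
            (Finset.sum_nonneg fun i _ => Real.rpow_nonneg (hβ0 i) _) ?_ (by positivity)
          rw [e6]; exact hmono2.trans_eq e7
      _ = weakNorm (ENNReal.ofReal qstar) m φ *
            (∫ t in (0:ℝ)..1, ‖S t‖ ^ qstar) ^ (1/qstar) := by
          rw [Real.mul_rpow (Real.rpow_nonneg hW0 _) hI0, one_div,
            Real.rpow_rpow_inv hW0 hqne]
      _ ≤ weakNorm (ENNReal.ofReal qstar) m φ * (K * radNorm n w) := by
          refine mul_le_mul_of_nonneg_left ?_ hW0
          simp only [hSdef]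
          exact hKahane n w
  -- combine
  calc ∑ i ∈ Finset.range m, |φ i (∑ k ∈ Finset.range n, ν i k • w k)|
      ≤ (1/A) * ∑ i ∈ Finset.range m, α i * β i := step2
    _ ≤ (1/A) * (lpNormFin (conjExp (ENNReal.ofReal qstar)) m α *
          (∑ i ∈ Finset.range m, β i ^ qstar) ^ (1/qstar)) :=
        mul_le_mul_of_nonneg_left step4 (by positivity)
    _ ≤ (1/A) * (lpNormFin (conjExp (ENNReal.ofReal qstar)) m α *
          (weakNorm (ENNReal.ofReal qstar) m φ * (K * radNorm n w))) := by
        refine mul_le_mul_of_nonneg_left ?_ (by positivity)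
        exact mul_le_mul_of_nonneg_left step5 hL0
    _ = (1 / A) * K * lpNormFin (conjExp (ENNReal.ofReal qstar)) m α *
          weakNorm (ENNReal.ofReal qstar) m φ * radNorm n w := by ring

end
end
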